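/- arXiv:2306.05538 — 7 statements merged into one kernel-verified Lean document; each statement's English description precedes it below -/
import Mathlib

section
/- Let C_• = (C_0 ⊆ C_1 ⊆ ⋯ ⊆ C_k) be a simplicial flag of cones in ℝ_{≥0}×ℝⁿ, with C_{−1} = {0}. Let w_i ∈ C_i∖C_{i−1} and w'_i ∈ C_i∖C_{i−1} for 0 ≤ i ≤ k be two choices of points. Then for all 𝔲, 𝔳 ∈ ℝ^{1+n}: (⟨w_0,𝔲⟩,…,⟨w_k,𝔲⟩) ≤_lex (⟨w_0,𝔳⟩,…,⟨w_k,𝔳⟩) if and only if (⟨w'_0,𝔲⟩,…,⟨w'_k,𝔲⟩) ≤_lex (⟨w'_0,𝔳⟩,…,⟨w'_k,𝔳⟩). In other words, the preorder on ℝ^{1+n} defined by lexicographic comparison of pairings against the chosen points depends only on the flag, not on the choice of points. -/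
open Finset

noncomputable section

/-- The pairing `⟨w,𝔲⟩ = rγ + ⟨x,u⟩` on `ℝ × ℝⁿ`. -/
def pairE {n : ℕ} (w u : ℝ × (Fin n → ℝ)) : ℝ :=
  w.1 * u.1 + ∑ i, w.2 i * u.2 i

/-- The standard pairing between `ℝⁿ` and `ℤⁿ`. -/
def pairZ {n : ℕ} (x : Fin n → ℝ) (u : Fin n → ℤ) : ℝ :=
  ∑ i, x i * (u i : ℝ)

/-- The cone generated by finitely many vectors. -/
def coneGen {V : Type*} [AddCommMonoid V] [Module ℝ V] {r : ℕ} (v : Fin r → V) : Set V :=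
  {x | ∃ lam : Fin r → ℝ, (∀ j, 0 ≤ lam j) ∧ x = ∑ j, lam j • v j}

/-- The cone generated by `v 0, …, v i` (out of the family `v`). -/
def coneGenUpTo {V : Type*} [AddCommMonoid V] [Module ℝ V] {r : ℕ} (v : Fin r → V) (i : ℕ) :
    Set V :=
  {x | ∃ lam : Fin r → ℝ, (∀ j, 0 ≤ lam j) ∧ (∀ j : Fin r, i < (j : ℕ) → lam j = 0) ∧
    x = ∑ j, lam j • v j}

/-- A strongly convex polyhedral cone: finitely generated and containing no line. -/
def IsSCPCone {V : Type*} [AddCommGroup V] [Module ℝ V] (C : Set V) : Prop :=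
  (∃ r : ℕ, ∃ v : Fin r → V, C = coneGen v) ∧ ∀ x ∈ C, -x ∈ C → x = 0

/-- The dimension of a subset of a vector space: dimension of its linear span. -/
def spanDim {V : Type*} [AddCommGroup V] [Module ℝ V] (C : Set V) : ℕ :=
  Module.finrank ℝ (Submodule.span ℝ C)

/-- `flagPrev C i` is `C (i-1)`, with the convention `C (-1) = {0}`. -/
def flagPrev {V : Type*} [Zero V] (C : ℕ → Set V) : ℕ → Set V
  | 0 => {0}
  | (i + 1) => C i

/-- A flag of cones `C 0 ⊆ ⋯ ⊆ C k` in `ℝ≥0 × ℝⁿ`, with `dim (C i) = i + 1`. -/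
def IsFlagOfCones (n k : ℕ) (C : ℕ → Set (ℝ × (Fin n → ℝ))) : Prop :=
  (∀ i ≤ k, IsSCPCone (C i)) ∧
  (∀ i ≤ k, C i ⊆ {w | 0 ≤ w.1}) ∧
  (∀ i ≤ k, spanDim (C i) = i + 1) ∧
  (∀ i, i + 1 ≤ k → C i ⊆ C (i + 1))

/-- A simplicial flag of cones: a flag of cones in which `C i` is generated by
`v 0, …, v i` for a linearly independent family `v`. -/
def IsSimplicialFlagOfCones (n k : ℕ) (C : ℕ → Set (ℝ × (Fin n → ℝ))) : Prop :=
  IsFlagOfCones n k C ∧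
  ∃ v : Fin (k + 1) → ℝ × (Fin n → ℝ), LinearIndependent ℝ v ∧ ∀ i ≤ k, C i = coneGenUpTo v i

/-- A `Γ`-admissible cone in `ℝ≥0 × ℝⁿ`. -/
def IsGammaAdmissibleCone {n : ℕ} (Γ : AddSubgroup ℝ) (D : Set (ℝ × (Fin n → ℝ))) : Prop :=
  ∃ q : ℕ, ∃ γ : Fin q → ℝ, ∃ u : Fin q → (Fin n → ℤ), (∀ l, γ l ∈ Γ) ∧
    D = {w | 0 ≤ w.1 ∧ ∀ l, w.1 * γ l + pairZ w.2 (u l) ≤ 0}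

/-- A `Γ`-rational polyhedron in `ℝⁿ`. -/
def IsGammaRatPolyhedron {n : ℕ} (Γ : AddSubgroup ℝ) (Q : Set (Fin n → ℝ)) : Prop :=
  ∃ q : ℕ, ∃ u : Fin q → (Fin n → ℤ), ∃ γ : Fin q → ℝ, (∀ l, γ l ∈ Γ) ∧
    Q = {x | ∀ l, pairZ x (u l) ≤ γ l}

/-- A polyhedron in `ℝⁿ`: a finite intersection of closed affine half-spaces. -/
def IsPolyhedron {n : ℕ} (P : Set (Fin n → ℝ)) : Prop :=
  ∃ q : ℕ, ∃ a : Fin q → (Fin n → ℝ), ∃ b : Fin q → ℝ,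
    P = {x | ∀ l, ∑ i, a l i * x i ≤ b l}

/-- A set containing no affine line. -/
def HasNoLine {n : ℕ} (P : Set (Fin n → ℝ)) : Prop :=
  ¬ ∃ x d : Fin n → ℝ, d ≠ 0 ∧ ∀ t : ℝ, x + t • d ∈ P

/-- The dimension of a polyhedron: the dimension of its affine span. -/
def polyDim {n : ℕ} (P : Set (Fin n → ℝ)) : ℕ :=
  Module.finrank ℝ (affineSpan ℝ P).direction

/-- A flag of polyhedra `P 0 ⊆ ⋯ ⊆ P k` in `ℝⁿ`: nonempty polyhedra containing no affine
line, with `dim (P i) = i`. -/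
def IsFlagOfPolyhedra (n k : ℕ) (P : ℕ → Set (Fin n → ℝ)) : Prop :=
  (∀ i ≤ k, (P i).Nonempty ∧ IsPolyhedron (P i) ∧ HasNoLine (P i) ∧ polyDim (P i) = i) ∧
  (∀ i, i + 1 ≤ k → P i ⊆ P (i + 1))

/-- The closed cone over a subset of `ℝⁿ`. -/
def closedConeOver {n : ℕ} (P : Set (Fin n → ℝ)) : Set (ℝ × (Fin n → ℝ)) :=
  closure {w : ℝ × (Fin n → ℝ) | ∃ l : ℝ, ∃ x ∈ P, 0 < l ∧ w = (l, l • x)}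

/-- A `Γ`-rational polyhedral set: a finite union of `Γ`-rational polyhedra. -/
def IsGammaRatPolyhedralSet {n : ℕ} (Γ : AddSubgroup ℝ) (U : Set (Fin n → ℝ)) : Prop :=
  ∃ m : ℕ, ∃ Q : Fin m → Set (Fin n → ℝ), (∀ j, IsGammaRatPolyhedron Γ (Q j)) ∧ U = ⋃ j, Q j

/-- A `Γ`-rational polytope: a bounded `Γ`-rational polyhedron. -/
def IsGammaRatPolytope {n : ℕ} (Γ : AddSubgroup ℝ) (Q : Set (Fin n → ℝ)) : Prop :=
  IsGammaRatPolyhedron Γ Q ∧ Bornology.IsBounded Q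

/-- A `Γ`-rational polytopal set: a finite union of `Γ`-rational polytopes. -/
def IsGammaRatPolytopalSet {n : ℕ} (Γ : AddSubgroup ℝ) (U : Set (Fin n → ℝ)) : Prop :=
  ∃ m : ℕ, ∃ Q : Fin m → Set (Fin n → ℝ), (∀ j, IsGammaRatPolytope Γ (Q j)) ∧ U = ⋃ j, Q j

/-- A prime filter on a lattice `L` of sets (ordered by inclusion, with meet = intersection
and join = union). -/
def IsPrimeFilterOn {α : Type*} (L : Set (Set α)) (F : Set (Set α)) : Prop :=
  F ⊆ L ∧ F.Nonempty ∧ F ≠ L ∧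
  (∀ U ∈ F, ∀ V ∈ L, U ⊆ V → V ∈ F) ∧
  (∀ U ∈ F, ∀ V ∈ F, U ∩ V ∈ F) ∧
  (∀ U ∈ L, ∀ V ∈ L, U ∪ V ∈ F → U ∈ F ∨ V ∈ F)

/-- `D` is a `Γ`-admissible neighborhood of the flag of cones `C 0 ⊆ ⋯ ⊆ C k`. -/
def IsGammaAdmNbhd {n : ℕ} (Γ : AddSubgroup ℝ) (k : ℕ) (C : ℕ → Set (ℝ × (Fin n → ℝ)))
    (D : Set (ℝ × (Fin n → ℝ))) : Prop :=
  IsGammaAdmissibleCone Γ D ∧ ∀ i ≤ k, (D ∩ intrinsicInterior ℝ (C i)).Nonempty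

/-- `Q` is a `Γ`-rational neighborhood of the flag of polyhedra `P 0 ⊆ ⋯ ⊆ P k`. -/
def IsGammaRatNbhd {n : ℕ} (Γ : AddSubgroup ℝ) (k : ℕ) (P : ℕ → Set (Fin n → ℝ))
    (Q : Set (Fin n → ℝ)) : Prop :=
  IsGammaRatPolyhedron Γ Q ∧ ∀ i ≤ k, (Q ∩ intrinsicInterior ℝ (P i)).Nonempty

/-- The lexicographic comparison of pairings against points `w 0, …, w k`. -/
def lexRel (n k : ℕ) (w : ℕ → ℝ × (Fin n → ℝ)) (a b : ℝ × (Fin n → ℝ)) : Prop :=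
  toLex (fun i : Fin (k + 1) => pairE (w i) a) ≤ toLex (fun i : Fin (k + 1) => pairE (w i) b)

/-- The embedding of `Γ × ℤⁿ` into `ℝ × ℝⁿ`. -/
def embGZ {n : ℕ} (Γ : AddSubgroup ℝ) (a : Γ × (Fin n → ℤ)) : ℝ × (Fin n → ℝ) :=
  ((a.1 : ℝ), fun i => (a.2 i : ℝ))

/-- The preorder on `Γ × ℤⁿ` associated to a (simplicial flag of cones with) chosen points
`w 0, …, w k`. -/
def flagRel (n k : ℕ) (Γ : AddSubgroup ℝ) (w : ℕ → ℝ × (Fin n → ℝ))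
    (a b : Γ × (Fin n → ℤ)) : Prop :=
  lexRel n k w (embGZ Γ a) (embGZ Γ b)

/-- `w` is a choice of points for the flag `C`: `w i ∈ C i \ C (i-1)` for `i ≤ k`. -/
def IsChoiceOfPoints (n k : ℕ) (C : ℕ → Set (ℝ × (Fin n → ℝ)))
    (w : ℕ → ℝ × (Fin n → ℝ)) : Prop :=
  ∀ i ≤ k, w i ∈ C i \ flagPrev C i

/-- A valuated monomial preorder on `Γ × ℤⁿ`. -/
def IsValuatedMonomialPreorder {n : ℕ} (Γ : AddSubgroup ℝ)
    (r : (Γ × (Fin n → ℤ)) → (Γ × (Fin n → ℤ)) → Prop) : Prop :=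
  (∀ a, r a a) ∧ (∀ a b c, r a b → r b c → r a c) ∧ (∀ a b, r a b ∨ r b a) ∧
  (∀ a b c, r a b → r (a + c) (b + c)) ∧
  (∀ α β : Γ, (α : ℝ) ≤ (β : ℝ) → r (α, 0) (β, 0))

/-- A Chan–Maclagan preorder on `Γ × ℤⁿ`. -/
def IsChanMaclaganPreorder {n : ℕ} (Γ : AddSubgroup ℝ)
    (r : (Γ × (Fin n → ℤ)) → (Γ × (Fin n → ℤ)) → Prop) : Prop :=
  IsValuatedMonomialPreorder Γ r ∧ ∀ a, ∃ β : Γ, r (β, 0) a ∧ ¬ r a (β, 0)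


namespace FlagAux

lemma pairE_sum {n m : ℕ} (c : Fin m → ℝ) (v : Fin m → ℝ × (Fin n → ℝ)) (u : ℝ × (Fin n → ℝ)) :
    pairE (∑ j, c j • v j) u = ∑ j, c j * pairE (v j) u := by
  simp only [pairE, Prod.fst_sum, Prod.snd_sum, Finset.sum_apply, Prod.smul_fst, Prod.smul_snd,
    Pi.smul_apply, smul_eq_mul, Finset.sum_mul, mul_add, Finset.mul_sum]
  rw [Finset.sum_add_distrib, Finset.sum_comm (s := Finset.univ) (t := Finset.univ)]
  ring_nf
  rw [add_comm]; congr 1; exact Finset.sum_congr rfl fun x _ => by ring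

lemma lexChar {N : ℕ} (f : Fin N → ℝ) :
    (toLex (0 : Fin N → ℝ) ≤ toLex f) ↔
      ((0 : Fin N → ℝ) = f ∨ ∃ i, (∀ j, j < i → (0 : ℝ) = f j) ∧ (0 : ℝ) < f i) :=
  Iff.rfl

lemma le_of_first_pos {N : ℕ} (f : Fin N → ℝ) (i0 : Fin N)
    (hz : ∀ j, j < i0 → f j = 0) (hpos : 0 < f i0) :
    toLex (0 : Fin N → ℝ) ≤ toLex f :=
  (lexChar f).mpr (Or.inr ⟨i0, fun j hj => (hz j hj).symm, hpos⟩)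

lemma not_le_of_first_neg {N : ℕ} (f : Fin N → ℝ) (i0 : Fin N)
    (hz : ∀ j, j < i0 → f j = 0) (hneg : f i0 < 0) :
    ¬ toLex (0 : Fin N → ℝ) ≤ toLex f := by
  intro h
  rcases (lexChar f).mp h with h | ⟨i1, hj1, hi1⟩
  · rw [← h] at hneg; simp at hneg
  · rcases lt_trichotomy i1 i0 with hlt | rfl | hlt
    · rw [hz i1 hlt] at hi1; exact lt_irrefl _ hi1
    · exact absurd (hi1.trans hneg) (lt_irrefl _)
    · rw [← hj1 i0 hlt] at hneg; exact lt_irrefl _ hneg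

lemma core_iff {N : ℕ} (d e : Fin N → ℝ) (lam : Fin N → Fin N → ℝ)
    (hz : ∀ i j : Fin N, i < j → lam i j = 0) (hdiag : ∀ i, 0 < lam i i)
    (he : ∀ i, e i = ∑ j, lam i j * d j) :
    (toLex (0 : Fin N → ℝ) ≤ toLex d) ↔ (toLex (0 : Fin N → ℝ) ≤ toLex e) := by
  by_cases hd : d = 0
  · have heq : e = 0 := funext fun i => by simp [he, hd]
    rw [hd, heq]
  · have hne : ∃ i, d i ≠ 0 := by
      by_contra hc
      push_neg at hc
      exact hd (funext hc)
    have hSne : (Finset.univ.filter (fun i => d i ≠ 0)).Nonempty := by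
      obtain ⟨i, hi⟩ := hne
      exact ⟨i, Finset.mem_filter.mpr ⟨Finset.mem_univ i, hi⟩⟩
    set i0 := (Finset.univ.filter (fun i => d i ≠ 0)).min' hSne with hi0def
    have hi0 : d i0 ≠ 0 :=
      (Finset.mem_filter.mp ((Finset.univ.filter (fun i => d i ≠ 0)).min'_mem hSne)).2
    have hjz : ∀ j, j < i0 → d j = 0 := by
      intro j hj
      by_contra hjc
      exact absurd (Finset.min'_le _ j (Finset.mem_filter.mpr ⟨Finset.mem_univ j, hjc⟩))
        (not_le_of_gt hj)
    have hez : ∀ j, j < i0 → e j = 0 := by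
      intro j hj
      rw [he]
      refine Finset.sum_eq_zero fun m _ => ?_
      rcases lt_or_ge j m with hm | hm
      · rw [hz j m hm, zero_mul]
      · rw [hjz m (lt_of_le_of_lt hm hj), mul_zero]
    have hei0 : e i0 = lam i0 i0 * d i0 := by
      rw [he]
      refine Finset.sum_eq_single i0 (fun m _ hm => ?_) (by simp)
      rcases lt_or_ge i0 m with hmi | hmi
      · rw [hz i0 m hmi, zero_mul]
      · rw [hjz m (lt_of_le_of_ne hmi hm), mul_zero]
    rcases lt_or_gt_of_ne hi0 with hneg | hpos
    · constructor
      · intro h; exact absurd h (not_le_of_first_neg d i0 hjz hneg)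
      · intro h
        exact absurd h (not_le_of_first_neg e i0 hez
          (hei0 ▸ mul_neg_of_pos_of_neg (hdiag i0) hneg))
    · constructor
      · intro _
        exact le_of_first_pos e i0 hez (hei0 ▸ mul_pos (hdiag i0) hpos)
      · intro _
        exact le_of_first_pos d i0 hjz hpos

lemma getLam {n k : ℕ} {C : ℕ → Set (ℝ × (Fin n → ℝ))}
    {v : Fin (k + 1) → ℝ × (Fin n → ℝ)}
    (hCv : ∀ i ≤ k, C i = coneGenUpTo v i)
    {w : ℕ → ℝ × (Fin n → ℝ)} (hw : IsChoiceOfPoints n k C w) (i : Fin (k + 1)) :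
    ∃ lam : Fin (k + 1) → ℝ, (∀ j, i < j → lam j = 0) ∧ 0 < lam i ∧
      w i = ∑ j, lam j • v j := by
  have hik : (i : ℕ) ≤ k := Fin.is_le i
  obtain ⟨hwi, hwni⟩ := hw i hik
  rw [hCv i hik] at hwi
  obtain ⟨lam, hnn, hup, hsum⟩ := hwi
  refine ⟨lam, fun j hj => hup j hj, ?_, hsum⟩
  rcases lt_or_eq_of_le (hnn i) with hpos | heq
  · exact hpos
  · exfalso
    cases hiv : (i : ℕ) with
    | zero =>
      apply hwni
      have hall : ∀ j, lam j = 0 := by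
        intro j
        rcases Nat.eq_zero_or_pos (j : ℕ) with hj0 | hj0
        · have : j = i := Fin.ext (by omega)
          rw [this, ← heq]
        · exact hup j (by omega)
      have : w (i : ℕ) = 0 := by
        rw [hsum]
        exact Finset.sum_eq_zero fun j _ => by rw [hall j, zero_smul]
      rw [hiv] at this ⊢
      show w 0 ∈ ({0} : Set (ℝ × (Fin n → ℝ)))
      simp [this]
    | succ m =>
      apply hwni
      have hmem : w (i : ℕ) ∈ C m := by
        rw [hCv m (by omega)]
        refine ⟨lam, hnn, fun j hj => ?_, hsum⟩
        rcases Nat.lt_or_ge m.succ (j : ℕ) with hj2 | hj2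
        · exact hup j (by omega)
        · have : j = i := Fin.ext (by omega)
          rw [this, ← heq]
      rw [hiv] at hmem ⊢
      exact hmem

end FlagAux

/-- For a simplicial flag of cones `C 0 ⊆ ⋯ ⊆ C k` in `ℝ≥0 × ℝⁿ`, the preorder
on `ℝ^{1+n}` given by lexicographic comparison of pairings against chosen points
`w i ∈ C i \ C (i-1)` does not depend on the choice of points. -/
theorem flag_preorder_independent_of_choice_of_points
    (n k : ℕ) (C : ℕ → Set (ℝ × (Fin n → ℝ)))
    (hC : IsSimplicialFlagOfCones n k C)
    (w w' : ℕ → ℝ × (Fin n → ℝ))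
    (hw : IsChoiceOfPoints n k C w) (hw' : IsChoiceOfPoints n k C w') :
    ∀ a b : ℝ × (Fin n → ℝ), lexRel n k w a b ↔ lexRel n k w' a b := by
  obtain ⟨_, v, _, hCv⟩ := hC
  intro a b
  set d : Fin (k + 1) → ℝ := fun j => pairE (v j) b - pairE (v j) a with hd
  have key : ∀ w₀ : ℕ → ℝ × (Fin n → ℝ), IsChoiceOfPoints n k C w₀ →
      (lexRel n k w₀ a b ↔ toLex (0 : Fin (k + 1) → ℝ) ≤ toLex d) := by
    intro w₀ hw₀
    choose lam hz hdiag hsum using FlagAux.getLam hCv hw₀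
    have hstep : lexRel n k w₀ a b ↔ toLex (0 : Fin (k + 1) → ℝ) ≤
        toLex ((fun i : Fin (k + 1) => pairE (w₀ i) b) - fun i : Fin (k + 1) => pairE (w₀ i) a) := by
      constructor
      · intro h; exact sub_nonneg.mpr h
      · intro h; exact sub_nonneg.mp h
    rw [hstep]
    exact (FlagAux.core_iff d _ lam (fun i j h => hz i j h) hdiag (fun i => by
      show pairE (w₀ i) b - pairE (w₀ i) a = _
      rw [hsum i, FlagAux.pairE_sum, FlagAux.pairE_sum, ← Finset.sum_sub_distrib]
      exact Finset.sum_congr rfl fun j _ => by rw [hd]; ring)).symm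
  rw [key w hw, key w' hw']

end
end

section
/- Let C be a cone in ℝ^d and let u be a linear functional on ℝ^d with C ⊆ {x ∈ ℝ^d : u(x) ≤ 0}. Let B = C ∩ ker u and assume dim B = dim C − 1 (so B is a facet of C). Let B' be a cone with B' ⊆ B and dim B' = dim B, and let C' be a cone with C' ⊆ C, dim C' = dim C, and B' = C' ∩ ker u. Suppose v lies in the relative interior of B' and w lies in the relative interior of C. Then there exists a real number ε > 0 such that v + εw ∈ C'. -/
open Finset

noncomputable section

lemma scp_zero_mem {V : Type*} [AddCommGroup V] [Module ℝ V] {C : Set V}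
    (h : IsSCPCone C) : (0 : V) ∈ C := by
  obtain ⟨⟨r, vv, rfl⟩, -⟩ := h
  exact ⟨0, fun j => le_refl 0, by simp⟩
lemma scp_add_mem {V : Type*} [AddCommGroup V] [Module ℝ V] {C : Set V}
    (h : IsSCPCone C) {x y : V} (hx : x ∈ C) (hy : y ∈ C) : x + y ∈ C := by
  obtain ⟨⟨r, vv, rfl⟩, -⟩ := h
  obtain ⟨a, ha, rfl⟩ := hx
  obtain ⟨b, hb, rfl⟩ := hy
  exact ⟨a + b, fun j => add_nonneg (ha j) (hb j), by
    rw [← Finset.sum_add_distrib]; simp [add_smul]⟩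
lemma scp_smul_mem {V : Type*} [AddCommGroup V] [Module ℝ V] {C : Set V}
    (h : IsSCPCone C) {c : ℝ} (hc : 0 ≤ c) {x : V} (hx : x ∈ C) : c • x ∈ C := by
  obtain ⟨⟨r, vv, rfl⟩, -⟩ := h
  obtain ⟨a, ha, rfl⟩ := hx
  exact ⟨fun j => c * a j, fun j => mul_nonneg hc (ha j), by
    rw [Finset.smul_sum]; simp [smul_smul]⟩
lemma perturb {d : ℕ} {s : Set (Fin d → ℝ)} (h0 : (0 : Fin d → ℝ) ∈ s)
    {x b : Fin d → ℝ} (hx : x ∈ intrinsicInterior ℝ s) (hb : b ∈ Submodule.span ℝ s) :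
    ∃ δ : ℝ, 0 < δ ∧ x + δ • b ∈ s := by
  rw [mem_intrinsicInterior] at hx
  obtain ⟨y, hy, rfl⟩ := hx
  have hdir : b ∈ (affineSpan ℝ s).direction := by
    rw [direction_affineSpan]
    refine Submodule.span_le.2 (fun z hz => ?_) hb
    simpa using vsub_mem_vectorSpan ℝ hz h0
  have hmem : ∀ t : ℝ, (y : Fin d → ℝ) + t • b ∈ affineSpan ℝ s := fun t => by
    simpa [add_comm] using AffineSubspace.vadd_mem_of_mem_direction
      (Submodule.smul_mem _ t hdir) y.2
  set f : ℝ → affineSpan ℝ s := fun t => ⟨(y : Fin d → ℝ) + t • b, hmem t⟩ with hf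
  have hcont : Continuous f := by
    apply Continuous.subtype_mk
    continuity
  have hf0 : f 0 = y := by simp [hf]
  have hnb : ∀ᶠ t in nhds (0 : ℝ), f t ∈ interior ((↑) ⁻¹' s : Set (affineSpan ℝ s)) := by
    apply hcont.continuousAt.eventually_mem
    rw [hf0]
    exact isOpen_interior.mem_nhds hy
  rw [Metric.eventually_nhds_iff] at hnb
  obtain ⟨ε, hε, hball⟩ := hnb
  refine ⟨ε / 2, by positivity, ?_⟩
  have := interior_subset (hball (y := ε / 2)
    (by rw [Real.dist_eq, sub_zero, abs_of_pos (by positivity)]; linarith))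
  exact this

/-- Let `C` be a cone contained in `{u ≤ 0}`, `B = C ∩ ker u` a facet of `C`,
`B' ⊆ B` a cone of full dimension in `B`, and `C' ⊆ C` a cone of full dimension in `C` with
`B' = C' ∩ ker u`. If `v` is in the relative interior of `B'` and `w` in the relative interior
of `C`, then `v + ε • w ∈ C'` for some `ε > 0`. -/
theorem exists_pos_eps_add_smul_mem_subcone
    (d : ℕ) (C : Set (Fin d → ℝ)) (hC : IsSCPCone C)
    (u : (Fin d → ℝ) →ₗ[ℝ] ℝ) (hCu : C ⊆ {x | u x ≤ 0})
    (hfacet : spanDim (C ∩ {x | u x = 0}) = spanDim C - 1)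
    (B' : Set (Fin d → ℝ)) (hB'cone : IsSCPCone B')
    (hB'sub : B' ⊆ C ∩ {x | u x = 0})
    (hB'dim : spanDim B' = spanDim (C ∩ {x | u x = 0}))
    (C' : Set (Fin d → ℝ)) (hC'cone : IsSCPCone C')
    (hC'sub : C' ⊆ C) (hC'dim : spanDim C' = spanDim C)
    (hB'C' : B' = C' ∩ {x | u x = 0})
    (v w : Fin d → ℝ)
    (hv : v ∈ intrinsicInterior ℝ B') (hw : w ∈ intrinsicInterior ℝ C) :
    ∃ ε : ℝ, 0 < ε ∧ v + ε • w ∈ C' := by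
  set B : Set (Fin d → ℝ) := C ∩ {x | u x = 0} with hBdef
  have hvB' : v ∈ B' := intrinsicInterior_subset hv
  have hwC : w ∈ C := intrinsicInterior_subset hw
  have hB'C'sub : B' ⊆ C' := by rw [hB'C']; exact Set.inter_subset_left
  -- degenerate case
  by_cases hdim0 : spanDim C = 0
  · have hspan : Submodule.span ℝ C = ⊥ := by
      have : Module.finrank ℝ (Submodule.span ℝ C) = 0 := hdim0
      exact Submodule.finrank_eq_zero.mp this
    have hC0 : C ⊆ {0} := fun x hx => by
      have : x ∈ Submodule.span ℝ C := Submodule.subset_span hx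
      rw [hspan] at this; simpa using this
    have hv0 : v = 0 := hC0 ((hB'sub hvB').1)
    have hw0 : w = 0 := hC0 hwC
    exact ⟨1, one_pos, by simp [hv0, hw0, scp_zero_mem hC'cone]⟩
  have hn1 : 1 ≤ spanDim C := Nat.one_le_iff_ne_zero.mpr hdim0
  -- u w < 0
  have hBker : Submodule.span ℝ B ≤ LinearMap.ker u :=
    Submodule.span_le.2 fun z hz => LinearMap.mem_ker.2 hz.2
  have huw : u w < 0 := by
    have hle0 : u w ≤ 0 := hCu hwC
    rcases lt_or_eq_of_le hle0 with h | h
    · exact h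
    -- if u w = 0 then u vanishes on C
    exfalso
    have hCzero : ∀ z ∈ C, u z = 0 := by
      intro z hz
      have hb : w - z ∈ Submodule.span ℝ C :=
        Submodule.sub_mem _ (Submodule.subset_span hwC) (Submodule.subset_span hz)
      obtain ⟨δ, hδ, hmem⟩ := perturb (scp_zero_mem hC) hw hb
      have := hCu hmem
      simp only [Set.mem_setOf_eq, map_add, map_smul, map_sub, smul_eq_mul] at this
      have huz : u z ≤ 0 := hCu hz
      nlinarith
    have hBC : B = C := by
      apply Set.Subset.antisymm Set.inter_subset_left
      intro z hz; exact ⟨hz, hCzero z hz⟩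
    rw [hBC] at hfacet
    omega
  -- find p ∈ C' with u p < 0
  have hp : ∃ p ∈ C', u p < 0 := by
    by_contra hcon
    push_neg at hcon
    have hC'B' : C' = B' := by
      rw [hB'C']
      apply Set.Subset.antisymm _ Set.inter_subset_left
      intro z hz
      exact ⟨hz, le_antisymm (hCu (hC'sub hz)) (hcon z hz)⟩
    rw [hC'B'] at hC'dim
    rw [hB'dim, hfacet] at hC'dim
    omega
  obtain ⟨p, hpC', hup⟩ := hp
  have hpC : p ∈ C := hC'sub hpC'
  have hpne : p ≠ 0 := fun h => by rw [h] at hup; simp at hup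
  -- span B ⊔ span {p} = span C
  have hinf : Submodule.span ℝ B ⊓ Submodule.span ℝ {p} = ⊥ := by
    rw [Submodule.eq_bot_iff]
    rintro x ⟨hx1, hx2⟩
    obtain ⟨c, rfl⟩ := Submodule.mem_span_singleton.mp hx2
    have : u (c • p) = 0 := hBker hx1
    rw [map_smul, smul_eq_mul] at this
    have hc : c = 0 := by
      rcases mul_eq_zero.mp this with h | h
      · exact h
      · exact absurd h (ne_of_lt hup)
    simp [hc]
  have hle : Submodule.span ℝ B ⊔ Submodule.span ℝ {p} ≤ Submodule.span ℝ C := by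
    apply sup_le
    · exact Submodule.span_mono Set.inter_subset_left
    · rw [Submodule.span_le]
      simpa using Submodule.subset_span hpC
  have hranks : Module.finrank ℝ ↥(Submodule.span ℝ B ⊔ Submodule.span ℝ {p})
      = Module.finrank ℝ ↥(Submodule.span ℝ C) := by
    have h1 := Submodule.finrank_sup_add_finrank_inf_eq
      (Submodule.span ℝ B) (Submodule.span ℝ {p})
    rw [hinf] at h1
    simp only [finrank_bot, add_zero] at h1
    rw [finrank_span_singleton hpne] at h1
    have h2 : Module.finrank ℝ ↥(Submodule.span ℝ B) = spanDim C - 1 := hfacet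
    unfold spanDim at *
    omega
  have hsup : Submodule.span ℝ B ⊔ Submodule.span ℝ {p} = Submodule.span ℝ C :=
    Submodule.eq_of_le_of_finrank_eq hle hranks
  -- decompose w
  have hwspan : w ∈ Submodule.span ℝ B ⊔ Submodule.span ℝ {p} := by
    rw [hsup]; exact Submodule.subset_span hwC
  obtain ⟨b, hb, q, hq, hbq⟩ := Submodule.mem_sup.mp hwspan
  obtain ⟨s, rfl⟩ := Submodule.mem_span_singleton.mp hq
  have hub : u b = 0 := hBker hb
  have huws : u w = s * u p := by
    rw [← hbq, map_add, map_smul, hub, smul_eq_mul, zero_add]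
  have hs : 0 < s := by nlinarith
  -- span B' = span B
  have hspanB' : Submodule.span ℝ B' = Submodule.span ℝ B := by
    apply Submodule.eq_of_le_of_finrank_eq (Submodule.span_mono hB'sub)
    exact hB'dim
  have hbB' : b ∈ Submodule.span ℝ B' := by rw [hspanB']; exact hb
  -- perturb v by b within B'
  obtain ⟨δ, hδ, hvb⟩ := perturb (scp_zero_mem hB'cone) hv hbB'
  refine ⟨δ, hδ, ?_⟩
  have : v + δ • w = (v + δ • b) + (δ * s) • p := by
    rw [← hbq]
    simp only [smul_add, smul_smul]
    abel
  rw [this]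
  exact scp_add_mem hC'cone (hB'C'sub hvb)
    (scp_smul_mem hC'cone (le_of_lt (mul_pos hδ hs)) hpC')


end
end

section
/- Let v_0,…,v_k ∈ ℝ_{≥0}×ℝⁿ be linearly independent vectors, and for 0 ≤ i ≤ k let C_i be the cone generated by v_0,…,v_i. Let γ ∈ Γ, u ∈ ℤⁿ, and put 𝔲 = (γ,u) ∈ ℝ^{1+n}. Then (⟨v_0,𝔲⟩, ⟨v_1,𝔲⟩, …, ⟨v_k,𝔲⟩) ≤_lex (0,…,0) if and only if either there exists 0 ≤ i ≤ k−1 such that the relative interior of C_i is contained in {w ∈ ℝ^{1+n} : ⟨w,𝔲⟩ < 0}, or C_k ⊆ {w ∈ ℝ^{1+n} : ⟨w,𝔲⟩ ≤ 0}. -/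
open Finset

noncomputable section

namespace Statement8Aux

open Finset Set

variable {n : ℕ}

lemma pairE_add (w w' u : ℝ × (Fin n → ℝ)) : pairE (w + w') u = pairE w u + pairE w' u := by
  simp [pairE, add_mul, Finset.sum_add_distrib]
  ring

lemma pairE_smul (r : ℝ) (w u : ℝ × (Fin n → ℝ)) : pairE (r • w) u = r * pairE w u := by
  simp only [pairE, Prod.smul_fst, Prod.smul_snd, smul_eq_mul, Pi.smul_apply, mul_add,
    Finset.mul_sum]
  ring_nf

lemma pairE_zero (u : ℝ × (Fin n → ℝ)) : pairE 0 u = 0 := by simp [pairE]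

lemma pairE_sum {m : ℕ} (f : Fin m → ℝ × (Fin n → ℝ)) (u : ℝ × (Fin n → ℝ)) :
    pairE (∑ j, f j) u = ∑ j, pairE (f j) u := by
  classical
  induction (Finset.univ : Finset (Fin m)) using Finset.induction_on with
  | empty => simp [pairE_zero]
  | @insert a s h ih => rw [Finset.sum_insert h, Finset.sum_insert h, pairE_add, ih]

lemma pairE_combo {m : ℕ} (lam : Fin m → ℝ) (v : Fin m → ℝ × (Fin n → ℝ))
    (u : ℝ × (Fin n → ℝ)) :
    pairE (∑ j, lam j • v j) u = ∑ j, lam j * pairE (v j) u := by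
  rw [pairE_sum]
  exact Finset.sum_congr rfl fun j _ => pairE_smul _ _ _

variable {r : ℕ} (v : Fin r → ℝ × (Fin n → ℝ)) {i : ℕ}

lemma zero_mem_coneGenUpTo : (0 : ℝ × (Fin n → ℝ)) ∈ coneGenUpTo v i :=
  ⟨0, fun _ => le_refl 0, fun _ _ => rfl, by simp⟩

lemma gen_mem_coneGenUpTo (j : Fin r) (hj : (j : ℕ) ≤ i) : v j ∈ coneGenUpTo v i := by
  refine ⟨fun m => if m = j then 1 else 0, ?_, ?_, ?_⟩
  · intro m; dsimp only; split <;> norm_num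
  · intro m hm; dsimp only; rw [if_neg]; rintro rfl; omega
  · rw [Finset.sum_eq_single j] <;> simp +contextual

lemma add_mem_coneGenUpTo {x y : ℝ × (Fin n → ℝ)} (hx : x ∈ coneGenUpTo v i)
    (hy : y ∈ coneGenUpTo v i) : x + y ∈ coneGenUpTo v i := by
  obtain ⟨a, ha0, hai, rfl⟩ := hx
  obtain ⟨b, hb0, hbi, rfl⟩ := hy
  exact ⟨a + b, fun j => add_nonneg (ha0 j) (hb0 j),
    fun j hj => by simp [hai j hj, hbi j hj],
    by rw [← Finset.sum_add_distrib]; exact Finset.sum_congr rfl fun j _ => (add_smul _ _ _).symm⟩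

lemma smul_mem_coneGenUpTo {t : ℝ} (ht : 0 ≤ t) {x : ℝ × (Fin n → ℝ)}
    (hx : x ∈ coneGenUpTo v i) : t • x ∈ coneGenUpTo v i := by
  obtain ⟨a, ha0, hai, rfl⟩ := hx
  exact ⟨t • a, fun j => mul_nonneg ht (ha0 j), fun j hj => by simp [hai j hj],
    by rw [Finset.smul_sum]; exact Finset.sum_congr rfl fun j _ => by simp [smul_smul]⟩

lemma convex_coneGenUpTo : Convex ℝ (coneGenUpTo v i) := by
  intro x hx y hy a b ha hb _
  exact add_mem_coneGenUpTo v (smul_mem_coneGenUpTo v ha hx) (smul_mem_coneGenUpTo v hb hy)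

lemma pairE_nonpos_on_cone {u : ℝ × (Fin n → ℝ)}
    (h : ∀ j : Fin r, (j : ℕ) ≤ i → pairE (v j) u ≤ 0) :
    ∀ z ∈ coneGenUpTo v i, pairE z u ≤ 0 := by
  rintro z ⟨lam, hlam0, hlami, rfl⟩
  rw [pairE_combo]
  apply Finset.sum_nonpos
  intro j _
  by_cases hj : (j : ℕ) ≤ i
  · exact mul_nonpos_of_nonneg_of_nonpos (hlam0 j) (h j hj)
  · rw [hlami j (by omega)]; simp

section Topo

variable {V : Type*} [NormedAddCommGroup V] [NormedSpace ℝ V]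

lemma prolong {C : Set V} {x y : V} (hx : x ∈ intrinsicInterior ℝ C) (hy : y ∈ C) :
    ∃ ε : ℝ, 0 < ε ∧ (1 + ε) • x - ε • y ∈ C := by
  obtain ⟨x', hx'int, hx'⟩ := mem_intrinsicInterior.mp hx
  have hxA : x ∈ affineSpan ℝ C := hx' ▸ x'.2
  have hyA : y ∈ affineSpan ℝ C := subset_affineSpan ℝ C hy
  have hmem : ∀ t : ℝ, t • (x - y) + y ∈ affineSpan ℝ C := by
    intro t
    have := (affineSpan ℝ C).smul_vsub_vadd_mem t hxA hyA hyA
    simpa [vsub_eq_sub, vadd_eq_add] using this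
  have hfc : Continuous (fun t : ℝ => (⟨t • (x - y) + y, hmem t⟩ : affineSpan ℝ C)) :=
    Continuous.subtype_mk ((continuous_id.smul continuous_const).add continuous_const) _
  have hU : IsOpen ((fun t : ℝ => (⟨t • (x - y) + y, hmem t⟩ : affineSpan ℝ C)) ⁻¹'
      interior ((↑) ⁻¹' C : Set (affineSpan ℝ C))) := hfc.isOpen_preimage _ isOpen_interior
  have h1 : (1 : ℝ) ∈ (fun t : ℝ => (⟨t • (x - y) + y, hmem t⟩ : affineSpan ℝ C)) ⁻¹'
      interior ((↑) ⁻¹' C : Set (affineSpan ℝ C)) := by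
    have he : (⟨(1:ℝ) • (x - y) + y, hmem 1⟩ : affineSpan ℝ C) = x' := by
      apply Subtype.ext
      simp [hx'.symm]
    show (⟨(1:ℝ) • (x - y) + y, hmem 1⟩ : affineSpan ℝ C) ∈
      interior ((↑) ⁻¹' C : Set (affineSpan ℝ C))
    rw [he]; exact hx'int
  obtain ⟨δ, hδ, hball⟩ := Metric.isOpen_iff.mp hU 1 h1
  refine ⟨δ / 2, by linarith, ?_⟩
  have ht : (1 + δ / 2) ∈ Metric.ball (1 : ℝ) δ := by
    simp only [Metric.mem_ball, Real.dist_eq]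
    rw [abs_of_nonneg (by linarith)]
    linarith
  have h2 : (⟨(1 + δ / 2) • (x - y) + y, hmem _⟩ : affineSpan ℝ C) ∈
      ((↑) ⁻¹' C : Set (affineSpan ℝ C)) := interior_subset (hball ht)
  have hC : (1 + δ / 2) • (x - y) + y ∈ C := h2
  convert hC using 1
  module

lemma add_mem_intrinsicInterior {C : Set V} (h0 : (0 : V) ∈ C)
    (hadd : ∀ a ∈ C, ∀ b ∈ C, a + b ∈ C) {x y : V}
    (hx : x ∈ intrinsicInterior ℝ C) (hy : y ∈ C) : x + y ∈ intrinsicInterior ℝ C := by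
  obtain ⟨x', hx'int, hx'⟩ := mem_intrinsicInterior.mp hx
  have hxA : x ∈ affineSpan ℝ C := hx' ▸ x'.2
  have hyA : y ∈ affineSpan ℝ C := subset_affineSpan ℝ C hy
  have h0A : (0 : V) ∈ affineSpan ℝ C := subset_affineSpan ℝ C h0
  have hxyA : x + y ∈ affineSpan ℝ C := by
    have := (affineSpan ℝ C).smul_vsub_vadd_mem 1 hyA h0A hxA
    simpa [vsub_eq_sub, vadd_eq_add, add_comm] using this
  have hsubA : ∀ z : affineSpan ℝ C, (z : V) - y ∈ affineSpan ℝ C := by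
    intro z
    have := (affineSpan ℝ C).smul_vsub_vadd_mem (-1) hyA h0A z.2
    simpa [vsub_eq_sub, vadd_eq_add, neg_add_eq_sub] using this
  have hTc : Continuous (fun z : affineSpan ℝ C => (⟨(z : V) - y, hsubA z⟩ : affineSpan ℝ C)) :=
    Continuous.subtype_mk (continuous_subtype_val.sub continuous_const) _
  set U := (fun z : affineSpan ℝ C => (⟨(z : V) - y, hsubA z⟩ : affineSpan ℝ C)) ⁻¹'
      interior ((↑) ⁻¹' C : Set (affineSpan ℝ C)) with hUdef
  have hUopen : IsOpen U := hTc.isOpen_preimage _ isOpen_interior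
  have hUS : U ⊆ ((↑) ⁻¹' C : Set (affineSpan ℝ C)) := by
    intro z hz
    have hz2 : (⟨(z : V) - y, hsubA z⟩ : affineSpan ℝ C) ∈
        ((↑) ⁻¹' C : Set (affineSpan ℝ C)) := interior_subset hz
    have hzC : (z : V) - y ∈ C := hz2
    have : ((z : V) - y) + y ∈ C := hadd _ hzC _ hy
    simpa using this
  have hmemU : (⟨x + y, hxyA⟩ : affineSpan ℝ C) ∈ U := by
    have he : (⟨(x + y : V) - y, hsubA ⟨x + y, hxyA⟩⟩ : affineSpan ℝ C) = x' := by
      apply Subtype.ext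
      simp [hx'.symm]
    show (⟨(x + y : V) - y, hsubA ⟨x + y, hxyA⟩⟩ : affineSpan ℝ C) ∈
      interior ((↑) ⁻¹' C : Set (affineSpan ℝ C))
    rw [he]; exact hx'int
  exact ⟨⟨x + y, hxyA⟩, interior_maximal hUS hUopen hmemU, rfl⟩

end Topo

/-- The key geometric computation: the relative interior of `coneGenUpTo v i` lies in the
open halfspace `{⟨·,u⟩ < 0}` iff all the pairings `⟨v j, u⟩`, `j ≤ i`, are nonpositive and
one of them is negative. -/
lemma ri_subset_iff {k : ℕ} (v : Fin (k + 1) → ℝ × (Fin n → ℝ)) (u : ℝ × (Fin n → ℝ)) (i : ℕ) :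
    intrinsicInterior ℝ (coneGenUpTo v i) ⊆ {w : ℝ × (Fin n → ℝ) | pairE w u < 0} ↔
    (∀ j : Fin (k + 1), (j : ℕ) ≤ i → pairE (v j) u ≤ 0) ∧
      (∃ j : Fin (k + 1), (j : ℕ) ≤ i ∧ pairE (v j) u < 0) := by
  constructor
  · intro h
    obtain ⟨x, hxri⟩ :=
      Set.Nonempty.intrinsicInterior (convex_coneGenUpTo v) ⟨0, zero_mem_coneGenUpTo v⟩
    have hx : x ∈ coneGenUpTo v i := intrinsicInterior_subset hxri
    have hpx : pairE x u < 0 := h hxri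
    constructor
    · intro j hj
      by_contra hpj
      push_neg at hpj
      have hvj : v j ∈ coneGenUpTo v i := gen_mem_coneGenUpTo v j hj
      set t : ℝ := (1 - pairE x u) / pairE (v j) u with htdef
      have ht : 0 < t := div_pos (by linarith) hpj
      have hmem : x + t • v j ∈ intrinsicInterior ℝ (coneGenUpTo v i) :=
        add_mem_intrinsicInterior (zero_mem_coneGenUpTo v)
          (fun a ha b hb => add_mem_coneGenUpTo v ha hb) hxri
          (smul_mem_coneGenUpTo v ht.le hvj)
      have := h hmem
      rw [Set.mem_setOf_eq, pairE_add, pairE_smul] at this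
      rw [htdef] at this
      rw [div_mul_cancel₀ _ (ne_of_gt hpj)] at this
      linarith
    · obtain ⟨lam, hlam0, hlami, rfl⟩ := hx
      rw [pairE_combo] at hpx
      have : ∃ j ∈ Finset.univ, lam j * pairE (v j) u < 0 := by
        by_contra hc
        push_neg at hc
        have : (0 : ℝ) ≤ ∑ j, lam j * pairE (v j) u :=
          Finset.sum_nonneg fun j hj => hc j hj
        linarith
      obtain ⟨j, -, hj⟩ := this
      have hlamj : 0 < lam j := by
        rcases lt_or_eq_of_le (hlam0 j) with h' | h'
        · exact h'
        · rw [← h'] at hj; simp at hj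
      refine ⟨j, ?_, ?_⟩
      · by_contra hji
        rw [hlami j (by omega)] at hlamj
        exact lt_irrefl _ hlamj
      · nlinarith
  · rintro ⟨hall, j₀, hj₀i, hj₀neg⟩ x hxri
    have hx : x ∈ coneGenUpTo v i := intrinsicInterior_subset hxri
    have hpx_le : pairE x u ≤ 0 := pairE_nonpos_on_cone v hall x hx
    rcases lt_or_eq_of_le hpx_le with h' | h'
    · exact h'
    · exfalso
      obtain ⟨ε, hε, hz⟩ := prolong hxri (gen_mem_coneGenUpTo v j₀ hj₀i)
      have hzle : pairE ((1 + ε) • x - ε • v j₀) u ≤ 0 := pairE_nonpos_on_cone v hall _ hz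
      have hcalc : pairE ((1 + ε) • x - ε • v j₀) u =
          (1 + ε) * pairE x u - ε * pairE (v j₀) u := by
        rw [sub_eq_add_neg, pairE_add, pairE_smul, ← neg_smul, pairE_smul]
        ring
      rw [hcalc, ← h'] at hzle
      nlinarith

lemma toLex_le_zero_of {k : ℕ} (p : Fin (k + 1) → ℝ) (j₀ : Fin (k + 1)) (h1 : p j₀ < 0)
    (h2 : ∀ j ≤ j₀, p j ≤ 0) : toLex p ≤ toLex (0 : Fin (k + 1) → ℝ) := by
  obtain ⟨m, hm, hmin⟩ := wellFounded_lt.has_min {j : Fin (k + 1) | p j < 0 ∧ j ≤ j₀}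
    ⟨j₀, h1, le_refl _⟩
  apply le_of_lt
  refine ⟨m, ?_, ?_⟩
  · intro j hj
    have hjj₀ : j ≤ j₀ := le_trans hj.le hm.2
    have hle : p j ≤ 0 := h2 j hjj₀
    have : ¬ p j < 0 := fun hneg => hmin j ⟨hneg, hjj₀⟩ hj
    simpa using le_antisymm hle (not_lt.mp this)
  · simpa using hm.1

lemma toLex_le_zero_iff {k : ℕ} (p : Fin (k + 1) → ℝ) :
    toLex p ≤ toLex (0 : Fin (k + 1) → ℝ) ↔
      p = 0 ∨ ∃ m, (∀ j, j < m → p j = 0) ∧ p m < 0 := by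
  rw [le_iff_lt_or_eq]
  constructor
  · rintro (⟨m, hpre, hneg⟩ | heq)
    · exact Or.inr ⟨m, fun j hj => by simpa using hpre j hj, by simpa using hneg⟩
    · exact Or.inl (congrArg ofLex heq)
  · rintro (heq | ⟨m, hpre, hneg⟩)
    · exact Or.inr (congrArg toLex heq)
    · exact Or.inl ⟨m, fun j hj => by simpa using hpre j hj, by simpa using hneg⟩

end Statement8Aux

/-- For linearly independent `v 0, …, v k` in `ℝ≥0 × ℝⁿ` and `𝔲 = (γ,u) ∈ Γ×ℤⁿ`,
the vector of pairings `(⟨v 0,𝔲⟩, …, ⟨v k,𝔲⟩)` is lexicographically `≤ 0` iff either the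
relative interior of some `C i` (`i ≤ k-1`) lies in `{⟨·,𝔲⟩ < 0}`, or `C k ⊆ {⟨·,𝔲⟩ ≤ 0}`. -/
theorem lex_nonpos_iff_flag_geometric_conditions
    (n k : ℕ) (hn : 1 ≤ n) (Γ : AddSubgroup ℝ) (hΓ : Γ ≠ ⊥)
    (v : Fin (k + 1) → ℝ × (Fin n → ℝ)) (hv : LinearIndependent ℝ v)
    (hvpos : ∀ i, 0 ≤ (v i).1)
    (γ : ℝ) (hγ : γ ∈ Γ) (u : Fin n → ℤ) :
    (toLex (fun i : Fin (k + 1) => pairE (v i) (γ, fun t => (u t : ℝ))) ≤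
        toLex (0 : Fin (k + 1) → ℝ)) ↔
      ((∃ i : ℕ, i < k ∧ intrinsicInterior ℝ (coneGenUpTo v i) ⊆
          {w : ℝ × (Fin n → ℝ) | pairE w (γ, fun t => (u t : ℝ)) < 0}) ∨
        coneGenUpTo v k ⊆ {w : ℝ × (Fin n → ℝ) | pairE w (γ, fun t => (u t : ℝ)) ≤ 0}) := by
  classical
  set 𝔲 : ℝ × (Fin n → ℝ) := (γ, fun t => (u t : ℝ)) with h𝔲
  set p : Fin (k + 1) → ℝ := fun i => pairE (v i) 𝔲 with hp
  constructor
  · intro hlex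
    rcases (Statement8Aux.toLex_le_zero_iff p).mp hlex with hzero | ⟨m, hpre, hneg⟩
    · refine Or.inr fun z hz => ?_
      refine Statement8Aux.pairE_nonpos_on_cone v (fun j _ => ?_) z hz
      have : p j = 0 := congrFun hzero j
      rw [hp] at this
      simp only [this]
      exact le_refl 0
    · by_cases hmk : (m : ℕ) < k
      · refine Or.inl ⟨(m : ℕ), hmk, ?_⟩
        refine (Statement8Aux.ri_subset_iff v 𝔲 (m : ℕ)).mpr ⟨?_, ⟨m, le_refl _, hneg⟩⟩
        intro j hj
        rcases lt_or_eq_of_le (show j ≤ m from hj) with h' | h'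
        · exact le_of_eq (hpre j h')
        · rw [h']; exact hneg.le
      · refine Or.inr ?_
        refine Statement8Aux.pairE_nonpos_on_cone v (fun j _ => ?_) 
        have hjm : j ≤ m := by
          have hmk' : (m : ℕ) = k := by omega
          exact Fin.le_def.mpr (by omega)
        rcases lt_or_eq_of_le hjm with h' | h'
        · exact le_of_eq (hpre j h')
        · rw [h']; exact hneg.le
  · rintro (⟨i, hik, hsub⟩ | hsub)
    · obtain ⟨hall, j₀, hj₀i, hj₀neg⟩ := (Statement8Aux.ri_subset_iff v 𝔲 i).mp hsub
      exact Statement8Aux.toLex_le_zero_of p j₀ hj₀neg fun j hj =>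
        hall j (le_trans (Fin.le_def.mp hj) hj₀i)
    · have hall : ∀ j : Fin (k + 1), p j ≤ 0 := fun j =>
        hsub (Statement8Aux.gen_mem_coneGenUpTo v j (Fin.is_le j))
      by_cases hex : ∃ j, p j < 0
      · obtain ⟨j₀, hj₀⟩ := hex
        exact Statement8Aux.toLex_le_zero_of p j₀ hj₀ fun j _ => hall j
      · push_neg at hex
        refine (Statement8Aux.toLex_le_zero_iff p).mpr (Or.inl ?_)
        funext j
        exact le_antisymm (hall j) (hex j)

end
end

section
/- Let v_0,…,v_k ∈ ℝ_{≥0}×ℝⁿ be linearly independent vectors, for 0 ≤ i ≤ k let C_i be the cone generated by v_0,…,v_i, and let Ũ be a Γ-admissible cone. Then the following are equivalent: (a) there exist finitely many pairs 𝔲_1,…,𝔲_q ∈ Γ×ℤⁿ such that (⟨v_0,𝔲_l⟩,…,⟨v_k,𝔲_l⟩) ≤_lex (0,…,0) for every 1 ≤ l ≤ q and {w ∈ ℝ_{≥0}×ℝⁿ : ⟨w,𝔲_l⟩ ≤ 0 for all 1 ≤ l ≤ q} ⊆ Ũ; (b) Ũ meets the relative interior of C_i for every 0 ≤ i ≤ k.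 -/
open Finset

noncomputable section

/-- pairing as a linear map in the first variable -/
def pairL {n : ℕ} (u : ℝ × (Fin n → ℝ)) : (ℝ × (Fin n → ℝ)) →ₗ[ℝ] ℝ where
  toFun w := pairE w u
  map_add' w w' := by
    simp only [pairE, Prod.fst_add, Prod.snd_add, Pi.add_apply, add_mul,
      Finset.sum_add_distrib]
    ring
  map_smul' c w := by
    simp only [pairE, Prod.smul_fst, Prod.smul_snd, Pi.smul_apply, smul_eq_mul,
      RingHom.id_apply, mul_add, Finset.mul_sum, mul_assoc]

lemma pairE_sum {n m : ℕ} (c : Fin m → ℝ) (v : Fin m → ℝ × (Fin n → ℝ))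
    (u : ℝ × (Fin n → ℝ)) :
    pairE (∑ j, c j • v j) u = ∑ j, c j * pairE (v j) u := by
  have : pairE (∑ j, c j • v j) u = pairL u (∑ j, c j • v j) := rfl
  rw [this, map_sum]
  refine Finset.sum_congr rfl fun j _ => ?_
  rw [map_smul, smul_eq_mul]
  rfl

lemma exists_dual {k : ℕ} {V : Type*} [AddCommGroup V] [Module ℝ V]
    (v : Fin (k + 1) → V) (hv : LinearIndependent ℝ v) :
    ∃ φ : Fin (k + 1) → (V →ₗ[ℝ] ℝ), ∀ j t, φ j (v t) = if j = t then 1 else 0 := by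
  set M := Submodule.span ℝ (Set.range v)
  obtain ⟨M', hM'⟩ := Submodule.exists_isCompl M
  set B := Module.Basis.span hv
  refine ⟨fun j => (B.coord j).comp (M.linearProjOfIsCompl M' hM'), fun j t => ?_⟩
  have hvt : v t ∈ M := Submodule.subset_span (Set.mem_range_self t)
  have h1 : M.linearProjOfIsCompl M' hM' (v t) = ⟨v t, hvt⟩ :=
    Submodule.linearProjOfIsCompl_apply_left hM' ⟨v t, hvt⟩
  have h2 : (⟨v t, hvt⟩ : M) = B t := by
    ext
    exact congrArg Subtype.val (Module.Basis.span_apply hv t).symm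
  simp only [LinearMap.comp_apply, h1, h2, Module.Basis.coord_apply, Module.Basis.repr_self]
  rw [Finsupp.single_apply]
  simp [eq_comm]


lemma mem_intrinsicInterior_coneGenUpTo {n k : ℕ} (v : Fin (k + 1) → ℝ × (Fin n → ℝ))
    (hv : LinearIndependent ℝ v) (i : ℕ) (c : Fin (k + 1) → ℝ)
    (hc : ∀ j : Fin (k + 1), (j : ℕ) ≤ i → 0 < c j)
    (hc0 : ∀ j : Fin (k + 1), i < (j : ℕ) → c j = 0) :
    (∑ j, c j • v j) ∈ intrinsicInterior ℝ (coneGenUpTo v i) := by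
  obtain ⟨φ, hφ⟩ := exists_dual v hv
  have hφsum : ∀ (d : Fin (k + 1) → ℝ) (j : Fin (k + 1)), φ j (∑ t, d t • v t) = d j := by
    intro d j
    rw [map_sum]
    have : ∀ t : Fin (k + 1), φ j (d t • v t) = if j = t then d t else 0 := by
      intro t
      rw [map_smul, smul_eq_mul, hφ j t]
      split <;> simp
    simp only [this]
    simp
  set s := coneGenUpTo v i with hs
  have hws : (∑ j, c j • v j) ∈ s := by
    refine ⟨c, fun j => ?_, hc0, rfl⟩
    rcases le_or_gt (j : ℕ) i with h | h
    · exact (hc j h).le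
    · exact (hc0 j h).ge
  -- key claim
  have key : ∀ x ∈ affineSpan ℝ s, (∀ j : Fin (k + 1), (j : ℕ) ≤ i → 0 < φ j x) → x ∈ s := by
    intro x hx hpos
    have hxM : x ∈ Submodule.span ℝ s := by
      have h1 : affineSpan ℝ s ≤ (Submodule.span ℝ s).toAffineSubspace := by
        apply affineSpan_le.mpr
        intro y hy
        exact Submodule.subset_span hy
      exact h1 hx
    have hP : (x = ∑ j, φ j x • v j) ∧ ∀ j : Fin (k + 1), i < (j : ℕ) → φ j x = 0 := by
      refine Submodule.span_induction ?_ ?_ ?_ ?_ hxM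
      · rintro y ⟨lam, hlam, hlam0, rfl⟩
        constructor
        · refine Finset.sum_congr rfl fun j _ => ?_
          rw [hφsum lam j]
        · intro j hj
          rw [hφsum lam j]
          exact hlam0 j hj
      · constructor <;> simp
      · rintro y z _ _ ⟨hy1, hy2⟩ ⟨hz1, hz2⟩
        constructor
        · conv_lhs => rw [hy1, hz1]
          rw [← Finset.sum_add_distrib]
          refine Finset.sum_congr rfl fun j _ => ?_
          rw [map_add, add_smul]
        · intro j hj
          rw [map_add, hy2 j hj, hz2 j hj, add_zero]
      · rintro a y _ ⟨hy1, hy2⟩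
        constructor
        · conv_lhs => rw [hy1]
          rw [Finset.smul_sum]
          refine Finset.sum_congr rfl fun j _ => ?_
          rw [map_smul, smul_eq_mul, smul_smul]
        · intro j hj
          rw [map_smul, hy2 j hj, smul_zero]
    refine ⟨fun j => φ j x, fun j => ?_, hP.2, hP.1⟩
    rcases le_or_gt (j : ℕ) i with h | h
    · exact (hpos j h).le
    · exact (hP.2 j h).ge
  rw [mem_intrinsicInterior]
  refine ⟨⟨∑ j, c j • v j, subset_affineSpan ℝ s hws⟩, ?_, rfl⟩
  rw [mem_interior]
  refine ⟨{z : affineSpan ℝ s | ∀ j : Fin (k + 1), (j : ℕ) ≤ i → 0 < φ j (z : ℝ × (Fin n → ℝ))},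
    ?_, ?_, ?_⟩
  · intro z hz
    exact key (z : ℝ × (Fin n → ℝ)) z.2 hz
  · have : {z : affineSpan ℝ s | ∀ j : Fin (k + 1), (j : ℕ) ≤ i →
        0 < φ j (z : ℝ × (Fin n → ℝ))} =
        ⋂ j : Fin (k + 1), {z : affineSpan ℝ s | (j : ℕ) ≤ i →
          0 < φ j (z : ℝ × (Fin n → ℝ))} := by
      ext z; simp [Set.mem_iInter]
    rw [this]
    refine isOpen_iInter_of_finite fun j => ?_
    by_cases h : (j : ℕ) ≤ i
    · simp only [h, forall_true_left]
      have hcont : Continuous fun z : affineSpan ℝ s => φ j (z : ℝ × (Fin n → ℝ)) :=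
        (φ j).continuous_of_finiteDimensional.comp continuous_subtype_val
      exact isOpen_lt continuous_const hcont
    · simp only [h]
      simp
  · intro j hj
    simp only [Set.mem_setOf_eq]
    rw [hφsum c j]
    exact hc j hj

lemma exists_perturb {n : ℕ} {s : Set (ℝ × (Fin n → ℝ))} {w y : ℝ × (Fin n → ℝ)}
    (hw : w ∈ intrinsicInterior ℝ s) (hy : y ∈ s) :
    ∃ ε : ℝ, 0 < ε ∧ w + ε • (w - y) ∈ s := by
  obtain ⟨w', hw', hww⟩ := mem_intrinsicInterior.1 hw
  have hwA : w ∈ affineSpan ℝ s := hww ▸ w'.2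
  have hyA : y ∈ affineSpan ℝ s := subset_affineSpan ℝ s hy
  have hmem : ∀ t : ℝ, y + t • (w - y) ∈ affineSpan ℝ s := by
    intro t
    have := AffineSubspace.smul_vsub_vadd_mem (affineSpan ℝ s) t hwA hyA hyA
    simpa [vsub_eq_sub, vadd_eq_add, add_comm] using this
  set g : ℝ → affineSpan ℝ s := fun t => ⟨y + t • (w - y), hmem t⟩ with hg
  have hgc : Continuous g := by
    apply Continuous.subtype_mk
    fun_prop
  have hg1 : g 1 = w' := by
    apply Subtype.ext
    simp [hg, hww]
  have hO : IsOpen (g ⁻¹' interior (((↑) : affineSpan ℝ s → ℝ × (Fin n → ℝ)) ⁻¹' s)) :=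
    isOpen_interior.preimage hgc
  have h1 : (1 : ℝ) ∈ g ⁻¹' interior (((↑) : affineSpan ℝ s → ℝ × (Fin n → ℝ)) ⁻¹' s) := by
    simp only [Set.mem_preimage, hg1]
    exact hw'
  obtain ⟨δ, hδ, hball⟩ := Metric.isOpen_iff.1 hO 1 h1
  refine ⟨δ / 2, by positivity, ?_⟩
  have hx : (1 + δ / 2 : ℝ) ∈ Metric.ball (1 : ℝ) δ := by
    rw [Metric.mem_ball, Real.dist_eq, show (1 + δ / 2 - 1 : ℝ) = δ / 2 by ring,
      abs_of_nonneg (by linarith)]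
    linarith
  have hmem2 : g (1 + δ / 2) ∈ (((↑) : affineSpan ℝ s → ℝ × (Fin n → ℝ)) ⁻¹' s) :=
    interior_subset (hball hx)
  have : y + (1 + δ / 2) • (w - y) ∈ s := hmem2
  have heq : y + (1 + δ / 2) • (w - y) = w + (δ / 2) • (w - y) := by
    rw [add_smul, one_smul]
    abel
  rwa [heq] at this

lemma lex_eventually {k : ℕ} (i : ℕ) (x : Fin (k + 1) → ℝ)
    (hx : toLex x ≤ toLex (0 : Fin (k + 1) → ℝ)) :
    ∀ᶠ ε in nhdsWithin (0 : ℝ) (Set.Ioi 0),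
      (∑ j : Fin (k + 1), (if (j : ℕ) ≤ i then ε ^ (j : ℕ) else 0) * x j) ≤ 0 := by
  by_cases hz : ∀ j : Fin (k + 1), (j : ℕ) ≤ i → x j = 0
  · filter_upwards with ε
    have h0 : ∀ j : Fin (k + 1), (if (j : ℕ) ≤ i then ε ^ (j : ℕ) else 0) * x j = 0 := by
      intro j
      by_cases h : (j : ℕ) ≤ i
      · simp [h, hz j h]
      · simp [h]
    simp [h0]
  · push_neg at hz
    set T : Finset (Fin (k + 1)) := univ.filter fun j => (j : ℕ) ≤ i ∧ x j ≠ 0 with hT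
    have hTne : T.Nonempty := by
      obtain ⟨j₁, h1, h2⟩ := hz
      exact ⟨j₁, by simp [hT, h1, h2]⟩
    set j₀ := T.min' hTne with hj₀def
    have hj₀T : j₀ ∈ T := T.min'_mem hTne
    have hj₀i : (j₀ : ℕ) ≤ i := (mem_filter.1 hj₀T).2.1
    have hj₀ne : x j₀ ≠ 0 := (mem_filter.1 hj₀T).2.2
    have hbelow : ∀ j : Fin (k + 1), j < j₀ → x j = 0 := by
      intro j hj
      by_contra hne
      have hji : (j : ℕ) ≤ i := le_trans (le_of_lt (by exact_mod_cast hj)) hj₀i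
      have : j ∈ T := by simp [hT, hji, hne]
      exact absurd (T.min'_le j this) (not_le.2 hj)
    have hneg : x j₀ < 0 := by
      have hne : x ≠ 0 := fun h => hj₀ne (by simp [h])
      have hlt : toLex x < toLex (0 : Fin (k + 1) → ℝ) :=
        hx.lt_of_ne (fun h => hne (toLex.injective h))
      obtain ⟨t, ht, ht2⟩ := hlt
      have ht2' : x t < 0 := ht2
      have htj : t = j₀ := by
        rcases lt_trichotomy t j₀ with h | h | h
        · exact absurd (hbelow t h) (ne_of_lt ht2')
        · exact h
        · exact absurd (ht j₀ h) hj₀ne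
      rwa [htj] at ht2'
    set S : ℝ → ℝ := fun ε =>
      ∑ j : Fin (k + 1), (if (j : ℕ) ≤ i ∧ j₀ ≤ j then ε ^ ((j : ℕ) - (j₀ : ℕ)) else 0) * x j
      with hS
    have hS0 : S 0 = x j₀ := by
      simp only [hS]
      rw [Finset.sum_eq_single j₀]
      · simp [hj₀i]
      · intro b _ hb
        by_cases h : (b : ℕ) ≤ i ∧ j₀ ≤ b
        · have : (0 : ℕ) < (b : ℕ) - (j₀ : ℕ) := by
            have : j₀ < b := lt_of_le_of_ne h.2 (Ne.symm hb)
            omega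
          simp only [if_pos h]
          rw [zero_pow (by omega)]
          ring
        · simp [h]
      · simp
    have hScont : Continuous S := by
      refine continuous_finset_sum _ fun j _ => ?_
      by_cases h : (j : ℕ) ≤ i ∧ j₀ ≤ j
      · simp only [if_pos h]
        exact (continuous_pow _).mul continuous_const
      · simp only [if_neg h]
        exact continuous_const.mul continuous_const
    have hev : ∀ᶠ ε in nhds (0 : ℝ), S ε < 0 := by
      have := hScont.continuousAt (x := (0 : ℝ))
      have h2 : ∀ᶠ ε in nhds (0 : ℝ), S ε ∈ Set.Iio (0 : ℝ) :=
        this.preimage_mem_nhds (Iio_mem_nhds (by rw [hS0]; exact hneg))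
      simpa using h2
    filter_upwards [hev.filter_mono nhdsWithin_le_nhds, self_mem_nhdsWithin] with ε hε hε0
    have hε0' : (0 : ℝ) < ε := hε0
    have key : (∑ j : Fin (k + 1), (if (j : ℕ) ≤ i then ε ^ (j : ℕ) else 0) * x j)
        = ε ^ (j₀ : ℕ) * S ε := by
      simp only [hS]
      rw [Finset.mul_sum]
      refine Finset.sum_congr rfl fun j _ => ?_
      by_cases h1 : (j : ℕ) ≤ i
      · by_cases h2 : j₀ ≤ j
        · rw [if_pos h1, if_pos ⟨h1, h2⟩, ← mul_assoc, ← pow_add,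
            Nat.add_sub_cancel' (by exact_mod_cast h2)]
        · have hj : j < j₀ := not_le.1 h2
          rw [hbelow j hj]
          simp
      · simp [h1]
    rw [key]
    exact mul_nonpos_of_nonneg_of_nonpos (pow_nonneg hε0'.le _) hε.le

/-- For a simplicial flag of cones generated by linearly independent
`v 0, …, v k` in `ℝ≥0 × ℝⁿ` and a `Γ`-admissible cone `Ũ`, the following are equivalent:
(a) `Ũ` contains a finite intersection of `Γ`-admissible half-spaces `{⟨·,𝔲 l⟩ ≤ 0}` with
each `(⟨v 0,𝔲 l⟩,…,⟨v k,𝔲 l⟩) ≤_lex 0`; (b) `Ũ` meets the relative interior of every `C i`. -/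
theorem mem_cone_filter_iff_admissible_nbhd
    (n k : ℕ) (hn : 1 ≤ n) (Γ : AddSubgroup ℝ) (hΓ : Γ ≠ ⊥)
    (v : Fin (k + 1) → ℝ × (Fin n → ℝ)) (hv : LinearIndependent ℝ v)
    (hvpos : ∀ i, 0 ≤ (v i).1)
    (U : Set (ℝ × (Fin n → ℝ))) (hU : IsGammaAdmissibleCone Γ U) :
    (∃ q : ℕ, ∃ γ : Fin q → ℝ, ∃ u : Fin q → (Fin n → ℤ), (∀ l, γ l ∈ Γ) ∧
      (∀ l, toLex (fun i : Fin (k + 1) => pairE (v i) (γ l, fun t => (u l t : ℝ))) ≤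
        toLex (0 : Fin (k + 1) → ℝ)) ∧
      {w : ℝ × (Fin n → ℝ) | 0 ≤ w.1 ∧
        ∀ l, pairE w (γ l, fun t => (u l t : ℝ)) ≤ 0} ⊆ U) ↔
    (∀ i ≤ k, (U ∩ intrinsicInterior ℝ (coneGenUpTo v i)).Nonempty) := by
  obtain ⟨q0, γ0, u0, hγ0, hUeq⟩ := hU
  constructor
  · rintro ⟨q, γ, u, hγ, hlex, hsub⟩ i hik
    have hev : ∀ᶠ ε in nhdsWithin (0 : ℝ) (Set.Ioi 0), ∀ l : Fin q,
        (∑ j : Fin (k + 1), (if (j : ℕ) ≤ i then ε ^ (j : ℕ) else 0) *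
          pairE (v j) (γ l, fun t => (u l t : ℝ))) ≤ 0 :=
      Filter.eventually_all.2 fun l => lex_eventually i _ (hlex l)
    obtain ⟨ε, hεl, hεI⟩ := (hev.and self_mem_nhdsWithin).exists
    have hε : (0 : ℝ) < ε := hεI
    set c : Fin (k + 1) → ℝ := fun j => if (j : ℕ) ≤ i then ε ^ (j : ℕ) else 0 with hc
    refine ⟨∑ j, c j • v j, hsub ⟨?_, ?_⟩,
      mem_intrinsicInterior_coneGenUpTo v hv i c
        (fun j hj => by simp only [hc, if_pos hj]; exact pow_pos hε _)
        (fun j hj => by simp only [hc, if_neg (not_le.2 hj)])⟩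
    · have hfst : (∑ j, c j • v j).1 = ∑ j, c j * (v j).1 := by
        rw [Prod.fst_sum]
        refine Finset.sum_congr rfl fun j _ => ?_
        simp [Prod.smul_fst]
      show 0 ≤ (∑ j, c j • v j).1
      rw [hfst]
      refine Finset.sum_nonneg fun j _ => ?_
      refine mul_nonneg ?_ (hvpos j)
      by_cases h : (j : ℕ) ≤ i
      · simp only [hc, if_pos h]; positivity
      · simp only [hc, if_neg h]; exact le_rfl
    · intro l
      rw [pairE_sum]
      exact hεl l
  · intro hb
    refine ⟨q0, γ0, u0, hγ0, ?_, ?_⟩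
    · intro l
      by_contra hlexc
      have htri := (Pi.isTrichotomous_lex (· < ·) (@fun _ => ((· < ·) : ℝ → ℝ → Prop))
        (IsWellFounded.wf)).trichotomous
        (a := (0 : Fin (k + 1) → ℝ))
        (b := fun i : Fin (k + 1) => pairE (v i) (γ0 l, fun t => (u0 l t : ℝ)))
      have hlt2 : Pi.Lex (· < ·) (@fun _ => ((· < ·) : ℝ → ℝ → Prop))
          (0 : Fin (k + 1) → ℝ)
          (fun i : Fin (k + 1) => pairE (v i) (γ0 l, fun t => (u0 l t : ℝ))) := by
        by_contra hnlt
        by_cases hgt : Pi.Lex (· < ·) (@fun _ => ((· < ·) : ℝ → ℝ → Prop))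
            (fun i : Fin (k + 1) => pairE (v i) (γ0 l, fun t => (u0 l t : ℝ))) (0 : Fin (k + 1) → ℝ)
        · exact absurd (Or.inr hgt) hlexc
        · exact absurd (Or.inl (congrArg toLex (htri hnlt hgt).symm)) hlexc
      obtain ⟨j₀, hbelow, hpos⟩ := hlt2
      set 𝔲 : ℝ × (Fin n → ℝ) := (γ0 l, fun t => (u0 l t : ℝ)) with h𝔲
      have hpos' : 0 < pairE (v j₀) 𝔲 := hpos
      obtain ⟨w, hwU, hwI⟩ := hb (j₀ : ℕ) (Nat.lt_succ_iff.1 j₀.isLt)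
      have hfw_le : pairE w 𝔲 ≤ 0 := by
        have hw' := hwU
        rw [hUeq] at hw'
        have := hw'.2 l
        simpa [pairE, pairZ, h𝔲] using this
      have hcone : ∀ z ∈ coneGenUpTo v (j₀ : ℕ), 0 ≤ pairE z 𝔲 := by
        rintro z ⟨lam, hlam, hlam0, rfl⟩
        rw [pairE_sum]
        refine Finset.sum_nonneg fun j _ => ?_
        rcases lt_trichotomy j j₀ with h | h | h
        · have hz : pairE (v j) 𝔲 = 0 := (hbelow j h).symm
          rw [hz, mul_zero]
        · subst h
          exact mul_nonneg (hlam j) hpos'.le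
        · rw [hlam0 j (by exact_mod_cast h), zero_mul]
      have hfw : pairE w 𝔲 = 0 :=
        le_antisymm hfw_le (hcone w (intrinsicInterior_subset hwI))
      have hvj₀ : v j₀ ∈ coneGenUpTo v (j₀ : ℕ) := by
        refine ⟨fun t => if t = j₀ then 1 else 0, fun t => by by_cases h : t = j₀ <;> simp [h],
          fun t ht => if_neg (by rintro rfl; exact lt_irrefl _ ht), ?_⟩
        simp [ite_smul]
      obtain ⟨ε, hε, hmem⟩ := exists_perturb hwI hvj₀
      have h1 := hcone _ hmem
      have h2 : pairE (w + ε • (w - v j₀)) 𝔲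
          = pairE w 𝔲 + ε * (pairE w 𝔲 - pairE (v j₀) 𝔲) := by
        have hrfl : ∀ z, pairE z 𝔲 = pairL 𝔲 z := fun z => rfl
        simp only [hrfl, map_add, map_smul, map_sub, smul_eq_mul]
      rw [h2, hfw] at h1
      have hmp := mul_pos hε hpos'
      linarith only [h1, hmp]
    · intro w hw
      rw [hUeq]
      exact ⟨hw.1, fun l => by simpa [pairE, pairZ] using hw.2 l⟩


end
end

section
/- Let v_0,…,v_k ∈ ℝ_{≥0}×ℝⁿ be linearly independent vectors such that the first coordinate of v_0 is positive. For 0 ≤ i ≤ k let C_i be the cone generated by v_0,…,v_i and let P_i = {x ∈ ℝⁿ : (1,x) ∈ C_i} (so P_• = (P_0 ⊆ ⋯ ⊆ P_k) is a flag of polyhedra in ℝⁿ). Let U be a Γ-rational polyhedron in ℝⁿ. Then the following are equivalent: (a) there exist finitely many pairs (γ_1,u_1),…,(γ_q,u_q) ∈ Γ×ℤⁿ such that (⟨v_0,(γ_l,u_l)⟩,…,⟨v_k,(γ_l,u_l)⟩) ≤_lex (0,…,0) for every 1 ≤ l ≤ q and {x ∈ ℝⁿ : γ_l + ⟨x,u_l⟩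 ≤ 0 for all 1 ≤ l ≤ q} ⊆ U; (b) U meets the relative interior of P_i for every 0 ≤ i ≤ k. -/
open Finset

noncomputable section

/-! ### Auxiliary lemmas for STATEMENT 10 -/

namespace StatementTenAux

variable {n k : ℕ}

/-- `pairE` as a linear map in its first argument. -/
def pairELM (a : ℝ × (Fin n → ℝ)) : (ℝ × (Fin n → ℝ)) →ₗ[ℝ] ℝ where
  toFun w := pairE w a
  map_add' x y := by
    simp only [pairE, Prod.fst_add, Prod.snd_add, Pi.add_apply, add_mul,
      Finset.sum_add_distrib]
    ring
  map_smul' c x := by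
    simp only [pairE, Prod.smul_fst, Prod.smul_snd, Pi.smul_apply, smul_eq_mul,
      RingHom.id_apply, mul_add, Finset.mul_sum]
    ring_nf

lemma pairE_sum {q : ℕ} (lam : Fin q → ℝ) (w : Fin q → ℝ × (Fin n → ℝ))
    (a : ℝ × (Fin n → ℝ)) :
    pairE (∑ j, lam j • w j) a = ∑ j, lam j * pairE (w j) a := by
  have h1 := map_sum (pairELM a) (fun j => lam j • w j) Finset.univ
  have h2 : ∀ j, pairELM a (lam j • w j) = lam j * pairE (w j) a := fun j => by
    rw [map_smul]; rfl
  simp only [h2] at h1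
  exact h1

/-- Dual functionals for a linearly independent family. -/
lemma exists_dual {V : Type*} [AddCommGroup V] [Module ℝ V] [FiniteDimensional ℝ V] {m : ℕ}
    {v : Fin m → V} (hv : LinearIndependent ℝ v) :
    ∃ f : Fin m → (V →ₗ[ℝ] ℝ),
      (∀ j i, f j (v i) = if i = j then 1 else 0) := by
  obtain ⟨W', hW'⟩ := (Submodule.span ℝ (Set.range v)).exists_isCompl
  let π := (Submodule.span ℝ (Set.range v)).projectionOnto W' hW'
  refine ⟨fun j => (Finsupp.lapply j) ∘ₗ hv.repr ∘ₗ π, fun j i => ?_⟩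
  have hvi : v i ∈ Submodule.span ℝ (Set.range v) :=
    Submodule.subset_span (Set.mem_range_self i)
  have hπ : π (v i) = ⟨v i, hvi⟩ := by
    simpa [π] using Submodule.linearProjOfIsCompl_apply_left hW' ⟨v i, hvi⟩
  have hr : hv.repr ⟨v i, hvi⟩ = Finsupp.single i 1 := hv.repr_eq_single i _ rfl
  simp [LinearMap.comp_apply, hπ, hr, Finsupp.lapply, Finsupp.single_apply]

lemma f_apply_sum (v : Fin (k+1) → ℝ × (Fin n → ℝ))
    (f : Fin (k+1) → (ℝ × (Fin n → ℝ)) →ₗ[ℝ] ℝ)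
    (hf : ∀ j m, f j (v m) = if m = j then 1 else 0)
    (lam : Fin (k+1) → ℝ) (j : Fin (k+1)) :
    f j (∑ m, lam m • v m) = lam j := by
  rw [map_sum]
  simp only [map_smul, hf, smul_eq_mul, mul_ite, mul_one, mul_zero]
  simp [Finset.sum_ite_eq']

/-- Reconstruction of elements of the span of `v 0, …, v i`. -/
lemma span_rep (v : Fin (k+1) → ℝ × (Fin n → ℝ))
    (f : Fin (k+1) → (ℝ × (Fin n → ℝ)) →ₗ[ℝ] ℝ)
    (hf : ∀ j m, f j (v m) = if m = j then 1 else 0) (i : ℕ) {w : ℝ × (Fin n → ℝ)}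
    (hw : w ∈ Submodule.span ℝ (v '' {j : Fin (k+1) | (j : ℕ) ≤ i})) :
    (w = ∑ j, f j w • v j) ∧ ∀ j : Fin (k+1), i < (j : ℕ) → f j w = 0 := by
  induction hw using Submodule.span_induction with
  | mem w hw =>
    obtain ⟨m, hm, rfl⟩ := hw
    constructor
    · have : ∀ j, f j (v m) • v j = if m = j then v j else 0 := by
        intro j; rw [hf]; split <;> simp
      simp only [this, Finset.sum_ite_eq Finset.univ m (fun j => v j), Finset.mem_univ,
        if_true]
    · intro j hj
      rw [hf]
      have : m ≠ j := by
        intro h; subst h; exact absurd hm (by simpa using hj.not_ge)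
      simp [this]
  | zero => simp
  | add x y hx hy ihx ihy =>
    refine ⟨?_, fun j hj => by simp [map_add, ihx.2 j hj, ihy.2 j hj]⟩
    simp only [map_add, add_smul, Finset.sum_add_distrib]
    rw [← ihx.1, ← ihy.1]
  | smul c x hx ih =>
    refine ⟨?_, fun j hj => by simp [map_smul, ih.2 j hj]⟩
    simp only [map_smul, smul_eq_mul, mul_smul, ← Finset.smul_sum]
    rw [← ih.1]

/-- The affine map `y ↦ (1, y)`. -/
def liftAff (n : ℕ) : (Fin n → ℝ) →ᵃ[ℝ] (ℝ × (Fin n → ℝ)) where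
  toFun y := (1, y)
  linear := LinearMap.prod 0 LinearMap.id
  map_vadd' p w := by
    ext <;> simp [Prod.ext_iff]

lemma affineSpan_subset_span (v : Fin (k+1) → ℝ × (Fin n → ℝ)) (i : ℕ) {y : Fin n → ℝ}
    (hy : y ∈ affineSpan ℝ {z : Fin n → ℝ | ((1:ℝ), z) ∈ coneGenUpTo v i}) :
    ((1:ℝ), y) ∈ Submodule.span ℝ (v '' {j : Fin (k+1) | (j : ℕ) ≤ i}) := by
  set Wi := Submodule.span ℝ (v '' {j : Fin (k+1) | (j : ℕ) ≤ i})
  have hle : affineSpan ℝ {z : Fin n → ℝ | ((1:ℝ), z) ∈ coneGenUpTo v i} ≤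
      AffineSubspace.comap (liftAff n) Wi.toAffineSubspace := by
    rw [affineSpan_le]
    intro z hz
    obtain ⟨lam, hnn, hz0, hrep⟩ := hz
    show liftAff n z ∈ Wi.toAffineSubspace
    rw [Submodule.mem_toAffineSubspace]
    have : liftAff n z = ∑ j, lam j • v j := hrep
    rw [this]
    refine Submodule.sum_mem _ fun j _ => ?_
    rcases le_or_gt (j : ℕ) i with h | h
    · exact Submodule.smul_mem _ _ (Submodule.subset_span ⟨j, h, rfl⟩)
    · simp [hz0 j h]
  have h2 : y ∈ AffineSubspace.comap (liftAff n) Wi.toAffineSubspace := hle hy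
  rw [AffineSubspace.mem_comap, Submodule.mem_toAffineSubspace] at h2
  exact h2

/-- A point whose coefficients on `v 0, …, v i` are all positive lies in the
relative interior. -/
lemma memIntrinsicInterior_of_pos (v : Fin (k+1) → ℝ × (Fin n → ℝ))
    (f : Fin (k+1) → (ℝ × (Fin n → ℝ)) →ₗ[ℝ] ℝ)
    (hf : ∀ j m, f j (v m) = if m = j then 1 else 0)
    (i : ℕ) (x : Fin n → ℝ) (lam : Fin (k+1) → ℝ)
    (hpos : ∀ j : Fin (k+1), (j : ℕ) ≤ i → 0 < lam j)
    (hzero : ∀ j : Fin (k+1), i < (j : ℕ) → lam j = 0)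
    (hx : ((1:ℝ), x) = ∑ j, lam j • v j) :
    x ∈ intrinsicInterior ℝ {y : Fin n → ℝ | ((1:ℝ), y) ∈ coneGenUpTo v i} := by
  set S := {y : Fin n → ℝ | ((1:ℝ), y) ∈ coneGenUpTo v i} with hS
  have hxS : x ∈ S := by
    refine ⟨lam, fun j => ?_, hzero, hx⟩
    rcases le_or_gt (j : ℕ) i with h | h
    · exact (hpos j h).le
    · simp [hzero j h]
  have hcont : ∀ j : Fin (k+1),
      Continuous fun y : affineSpan ℝ S => f j ((1:ℝ), (y : Fin n → ℝ)) := by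
    intro j
    exact (f j).continuous_of_finiteDimensional.comp
      (continuous_const.prodMk continuous_subtype_val)
  set T : Set (affineSpan ℝ S) :=
    {y | ∀ j : Fin (k+1), (j : ℕ) ≤ i → 0 < f j ((1:ℝ), (y : Fin n → ℝ))} with hT
  have hTopen : IsOpen T := by
    have : T = ⋂ j : Fin (k+1),
        {y : affineSpan ℝ S | (j : ℕ) ≤ i → 0 < f j ((1:ℝ), (y : Fin n → ℝ))} := by
      ext y; simp [hT, Set.mem_iInter]
    rw [this]
    refine isOpen_iInter_of_finite fun j => ?_
    by_cases hj : (j : ℕ) ≤ i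
    · have : {y : affineSpan ℝ S | (j : ℕ) ≤ i → 0 < f j ((1:ℝ), (y : Fin n → ℝ))} =
          (fun y : affineSpan ℝ S => f j ((1:ℝ), (y : Fin n → ℝ))) ⁻¹' Set.Ioi 0 := by
        ext y; simp [hj]
      rw [this]
      exact (isOpen_Ioi).preimage (hcont j)
    · have : {y : affineSpan ℝ S | (j : ℕ) ≤ i → 0 < f j ((1:ℝ), (y : Fin n → ℝ))} =
          Set.univ := by
        ext y; simp [hj]
      rw [this]; exact isOpen_univ
  have hTsub : T ⊆ (Subtype.val) ⁻¹' S := by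
    intro y hy
    have hspan := affineSpan_subset_span v i y.2
    obtain ⟨hrep, hzero'⟩ := span_rep v f hf i hspan
    refine ⟨fun j => f j ((1:ℝ), (y : Fin n → ℝ)), fun j => ?_, hzero', hrep⟩
    rcases le_or_gt (j : ℕ) i with h | h
    · exact (hy j h).le
    · simp [hzero' j h]
  have hxspan : x ∈ affineSpan ℝ S := subset_affineSpan ℝ S hxS
  have hxT : (⟨x, hxspan⟩ : affineSpan ℝ S) ∈ T := by
    intro j hj
    have : f j ((1:ℝ), x) = lam j := by rw [hx]; exact f_apply_sum v f hf lam j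
    rw [this]; exact hpos j hj
  exact mem_intrinsicInterior.mpr
    ⟨⟨x, hxspan⟩, mem_interior.mpr ⟨T, hTsub, hTopen, hxT⟩, rfl⟩

/-- Conversely, on the relative interior the `i`-th coefficient is positive. -/
lemma pos_of_memIntrinsicInterior (v : Fin (k+1) → ℝ × (Fin n → ℝ))
    (f : Fin (k+1) → (ℝ × (Fin n → ℝ)) →ₗ[ℝ] ℝ)
    (hf : ∀ j m, f j (v m) = if m = j then 1 else 0)
    (hv0 : 0 < (v 0).1) (hvpos : ∀ j, 0 ≤ (v j).1)
    (iF : Fin (k+1)) (x : Fin n → ℝ)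
    (hx : x ∈ intrinsicInterior ℝ {y : Fin n → ℝ | ((1:ℝ), y) ∈ coneGenUpTo v (iF : ℕ)}) :
    0 < f iF ((1:ℝ), x) := by
  set i : ℕ := (iF : ℕ)
  set S := {y : Fin n → ℝ | ((1:ℝ), y) ∈ coneGenUpTo v i} with hSdef
  have hnonneg : ∀ y ∈ S, 0 ≤ f iF ((1:ℝ), y) := by
    rintro y ⟨lam, hnn, hz, hrep⟩
    have : f iF ((1:ℝ), y) = lam iF := by rw [hrep]; exact f_apply_sum v f hf lam iF
    rw [this]; exact hnn iF
  have hxS : x ∈ S := intrinsicInterior_subset hx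
  have h0 : 0 ≤ f iF ((1:ℝ), x) := hnonneg x hxS
  rcases h0.lt_or_eq with h | hz
  · exact h
  exfalso
  set a : ℝ := (v iF).1 with ha
  have ha0 : 0 ≤ a := hvpos iF
  set s : ℝ := 1 / (1 + a) with hs
  have hs0 : 0 < s := by positivity
  have hsa : s * a < 1 := by
    rw [hs, div_mul_eq_mul_div, div_lt_one (by positivity)]
    linarith
  set t : ℝ := (1 - s * a) / (v 0).1 with ht
  have ht0 : 0 < t := div_pos (by linarith) hv0
  set lam' : Fin (k+1) → ℝ :=
    fun j => (if j = 0 then t else 0) + (if j = iF then s else 0) with hlam'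
  have hsum : ∑ j, lam' j • v j = t • v 0 + s • v iF := by
    simp only [hlam', add_smul, ite_smul, zero_smul, Finset.sum_add_distrib]
    rw [Finset.sum_ite_eq' Finset.univ (0 : Fin (k+1)) (fun j => t • v j),
      Finset.sum_ite_eq' Finset.univ iF (fun j => s • v j)]
    simp
  have hfst : (t • v 0 + s • v iF).1 = 1 := by
    show t * (v 0).1 + s * (v iF).1 = 1
    rw [ht, div_mul_cancel₀ _ (ne_of_gt hv0), ← ha]
    ring
  set x' : Fin n → ℝ := (t • v 0 + s • v iF).2 with hx'
  have hrep' : ((1:ℝ), x') = ∑ j, lam' j • v j := by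
    rw [hsum]; exact Prod.ext hfst.symm rfl
  have hx'S : x' ∈ S := by
    refine ⟨lam', fun j => ?_, fun j hj => ?_, hrep'⟩
    · show (0:ℝ) ≤ (if j = 0 then t else 0) + (if j = iF then s else 0)
      refine add_nonneg ?_ ?_ <;> split <;>
        first | exact ht0.le | exact hs0.le | exact le_rfl
    · have hj0 : j ≠ 0 := by
        intro h; subst h; simp at hj
      have hji : j ≠ iF := by
        intro h; subst h; exact lt_irrefl _ hj
      simp [hlam', hj0, hji]
  have hfx' : 0 < f iF ((1:ℝ), x') := by
    have : f iF ((1:ℝ), x') = lam' iF := by rw [hrep']; exact f_apply_sum v f hf lam' iF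
    rw [this]
    show 0 < (if iF = 0 then t else 0) + (if iF = iF then s else 0)
    rw [if_pos rfl]
    split <;> linarith
  obtain ⟨p, hpint, hpx⟩ := mem_intrinsicInterior.mp hx
  set c : ℝ → (Fin n → ℝ) := fun ε => ε • (x - x') + x with hc
  have hcmem : ∀ ε, c ε ∈ affineSpan ℝ S := fun ε =>
    AffineSubspace.smul_vsub_vadd_mem _ ε (subset_affineSpan ℝ S hxS)
      (subset_affineSpan ℝ S hx'S) (subset_affineSpan ℝ S hxS)
  set c' : ℝ → affineSpan ℝ S := fun ε => ⟨c ε, hcmem ε⟩ with hc'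
  have hcont : Continuous c' := by
    refine Continuous.subtype_mk ?_ _
    exact ((continuous_id.smul continuous_const).add continuous_const)
  have hc'0 : c' 0 = p := by
    apply Subtype.ext
    simp [hc', hc, hpx]
  have hmem : c' ⁻¹' interior (Subtype.val ⁻¹' S) ∈ nhds (0:ℝ) := by
    apply hcont.continuousAt.preimage_mem_nhds
    rw [hc'0]
    exact isOpen_interior.mem_nhds hpint
  obtain ⟨δ, hδ0, hball⟩ := Metric.mem_nhds_iff.mp hmem
  set ε : ℝ := δ / 2 with hε
  have hε0 : 0 < ε := by positivity
  have hεball : ε ∈ Metric.ball (0:ℝ) δ := by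
    rw [Metric.mem_ball, Real.dist_eq, sub_zero, abs_of_pos hε0]
    rw [hε]; linarith
  have hcε : c ε ∈ S := by
    have h2 : c' ε ∈ interior (Subtype.val ⁻¹' S) := hball hεball
    exact (interior_subset : interior (Subtype.val ⁻¹' S) ⊆ Subtype.val ⁻¹' S) h2
  have h1 : ((1:ℝ), c ε) = ε • (((1:ℝ), x) - ((1:ℝ), x')) + ((1:ℝ), x) := by
    refine Prod.ext ?_ rfl
    simp
  have hfc : f iF ((1:ℝ), c ε) = ε * (f iF ((1:ℝ), x) - f iF ((1:ℝ), x')) + f iF ((1:ℝ), x) := by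
    rw [h1, map_add, map_smul, map_sub, smul_eq_mul]
  have hneg : f iF ((1:ℝ), c ε) < 0 := by
    rw [hfc, ← hz]
    nlinarith
  exact absurd (hnonneg _ hcε) (not_le.mpr hneg)

/-- A lexicographically nonpositive vector pairs nonpositively against
rapidly decreasing positive coefficients. -/
lemma sum_pow_nonpos (i : ℕ) (e : Fin (k+1) → ℝ)
    (he : e = 0 ∨ ∃ j0 : Fin (k+1), (∀ j, j < j0 → e j = 0) ∧ e j0 < 0) :
    ∃ d : ℝ, 0 < d ∧ ∀ ε : ℝ, 0 < ε → ε ≤ d →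
      ∑ j : Fin (k+1), (if (j : ℕ) ≤ i then ε ^ (j : ℕ) else 0) * e j ≤ 0 := by
  rcases he with rfl | ⟨j0, hpre, hneg⟩
  · exact ⟨1, one_pos, fun ε _ _ => by simp⟩
  by_cases hij : i < (j0 : ℕ)
  · refine ⟨1, one_pos, fun ε _ _ => le_of_eq (Finset.sum_eq_zero fun j _ => ?_)⟩
    by_cases hj : (j : ℕ) ≤ i
    · have hlt : j < j0 := by rw [Fin.lt_def]; omega
      simp [hpre j hlt]
    · simp [hj]
  push_neg at hij
  set M : ℝ := ∑ j : Fin (k+1), |e j| with hM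
  have hM0 : 0 ≤ M := Finset.sum_nonneg fun j _ => abs_nonneg _
  refine ⟨min 1 ((-e j0) / (M + 1)),
    lt_min one_pos (div_pos (by linarith) (by positivity)), fun ε hε0 hεd => ?_⟩
  have hε1 : ε ≤ 1 := hεd.trans (min_le_left _ _)
  have hεM : ε * (M + 1) ≤ -e j0 := by
    have h2 : ε ≤ (-e j0) / (M + 1) := hεd.trans (min_le_right _ _)
    rw [le_div_iff₀ (by positivity)] at h2
    linarith
  set b : Fin (k+1) → ℝ :=
    fun j => if j = j0 then ε ^ (j0 : ℕ) * e j0 else ε ^ ((j0 : ℕ) + 1) * |e j| with hb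
  have hcomp : ∀ j ∈ (Finset.univ : Finset (Fin (k+1))),
      (if (j : ℕ) ≤ i then ε ^ (j : ℕ) else 0) * e j ≤ b j := by
    intro j _
    by_cases hj : j = j0
    · subst hj
      simp [hb, hij]
    · simp only [hb]
      rw [if_neg hj]
      have hbnn : 0 ≤ ε ^ ((j0 : ℕ) + 1) * |e j| := by positivity
      by_cases hji : (j : ℕ) ≤ i
      · rcases lt_or_gt_of_ne (hj : j ≠ j0) with hlt | hgt
        · simp [hpre j hlt]
        · rw [if_pos hji]
          have h1 : ε ^ (j : ℕ) * e j ≤ ε ^ (j : ℕ) * |e j| :=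
            mul_le_mul_of_nonneg_left (le_abs_self _) (by positivity)
          have h2 : ε ^ (j : ℕ) ≤ ε ^ ((j0 : ℕ) + 1) := by
            apply pow_le_pow_of_le_one hε0.le hε1
            have hgt' : (j0 : ℕ) < (j : ℕ) := hgt
            omega
          have h3 : ε ^ (j : ℕ) * |e j| ≤ ε ^ ((j0 : ℕ) + 1) * |e j| :=
            mul_le_mul_of_nonneg_right h2 (abs_nonneg _)
          linarith
      · rw [if_neg hji, zero_mul]; exact hbnn
  have hsum1 : ∑ j : Fin (k+1), (if (j : ℕ) ≤ i then ε ^ (j : ℕ) else 0) * e j ≤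
      ∑ j : Fin (k+1), b j := Finset.sum_le_sum hcomp
  have hsplit : ∑ j : Fin (k+1), b j =
      ε ^ (j0 : ℕ) * e j0 + ∑ j ∈ Finset.univ.erase j0, b j := by
    rw [← Finset.add_sum_erase Finset.univ b (Finset.mem_univ j0)]
    congr 1
    simp [hb]
  have herase : ∑ j ∈ Finset.univ.erase j0, b j ≤ ε ^ ((j0 : ℕ) + 1) * M := by
    have h1 : ∑ j ∈ Finset.univ.erase j0, b j =
        ∑ j ∈ Finset.univ.erase j0, ε ^ ((j0 : ℕ) + 1) * |e j| := by
      apply Finset.sum_congr rfl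
      intro j hjmem
      simp only [hb]
      rw [if_neg (Finset.ne_of_mem_erase hjmem)]
    rw [h1, hM, Finset.mul_sum]
    apply Finset.sum_le_sum_of_subset_of_nonneg (Finset.subset_univ _)
    intro j _ _
    positivity
  have hkey : ε ^ (j0 : ℕ) * e j0 + ε ^ ((j0 : ℕ) + 1) * M ≤ 0 := by
    have hpow : ε ^ ((j0 : ℕ) + 1) = ε ^ (j0 : ℕ) * ε := by ring
    rw [hpow]
    have hp : 0 < ε ^ (j0 : ℕ) := by positivity
    have hbr : e j0 + ε * M ≤ -ε := by nlinarith
    nlinarith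
  linarith

end StatementTenAux

/-- For a simplicial flag of cones generated by linearly independent
`v 0, …, v k` in `ℝ≥0 × ℝⁿ` with `(v 0).1 > 0`, the corresponding flag of polyhedra
`P i = {x | (1,x) ∈ C i}`, and a `Γ`-rational polyhedron `U`, the following are equivalent:
(a) `U` contains a finite intersection of `Γ`-rational half-spaces `{γ l + ⟨·,u l⟩ ≤ 0}`
with each `(⟨v 0,(γ l,u l)⟩,…,⟨v k,(γ l,u l)⟩) ≤_lex 0`; (b) `U` meets the relative
interior of every `P i`. -/
theorem mem_polyhedron_filter_iff_rational_nbhd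
    (n k : ℕ) (hn : 1 ≤ n) (Γ : AddSubgroup ℝ) (hΓ : Γ ≠ ⊥)
    (v : Fin (k + 1) → ℝ × (Fin n → ℝ)) (hv : LinearIndependent ℝ v)
    (hvpos : ∀ i, 0 ≤ (v i).1) (hv0 : 0 < (v 0).1)
    (P : ℕ → Set (Fin n → ℝ))
    (hP : ∀ i, P i = {x : Fin n → ℝ | ((1 : ℝ), x) ∈ coneGenUpTo v i})
    (U : Set (Fin n → ℝ)) (hU : IsGammaRatPolyhedron Γ U) :
    (∃ q : ℕ, ∃ γ : Fin q → ℝ, ∃ u : Fin q → (Fin n → ℤ), (∀ l, γ l ∈ Γ) ∧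
      (∀ l, toLex (fun i : Fin (k + 1) => pairE (v i) (γ l, fun t => (u l t : ℝ))) ≤
        toLex (0 : Fin (k + 1) → ℝ)) ∧
      {x : Fin n → ℝ | ∀ l, γ l + pairZ x (u l) ≤ 0} ⊆ U) ↔
    (∀ i ≤ k, (U ∩ intrinsicInterior ℝ (P i)).Nonempty) := by
  classical
  obtain ⟨f, hf⟩ := StatementTenAux.exists_dual hv
  constructor
  · -- (a) → (b)
    rintro ⟨q, γ, u, hγ, hlex, hsub⟩ i hik
    set e : Fin q → Fin (k+1) → ℝ :=
      fun l j => pairE (v j) (γ l, fun t => (u l t : ℝ)) with he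
    have hef : ∀ l, e l = 0 ∨
        ∃ j0 : Fin (k+1), (∀ j, j < j0 → e l j = 0) ∧ e l j0 < 0 := by
      intro l
      rcases (hlex l).lt_or_eq with h | h
      · have h'' : Pi.Lex (· < ·) (fun {_} => (· < ·)) (e l) (0 : Fin (k+1) → ℝ) := h
        obtain ⟨j0, h1, h2⟩ := h''
        exact Or.inr ⟨j0, fun j hj => h1 j hj, h2⟩
      · exact Or.inl (toLex.injective h)
    have hd : ∀ l, ∃ d, 0 < d ∧ ∀ ε : ℝ, 0 < ε → ε ≤ d →
        ∑ j : Fin (k+1), (if (j : ℕ) ≤ i then ε ^ (j : ℕ) else 0) * e l j ≤ 0 :=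
      fun l => StatementTenAux.sum_pow_nonpos i (e l) (hef l)
    choose d hd0 hdle using hd
    obtain ⟨ε, hε0, hεle⟩ : ∃ ε : ℝ, 0 < ε ∧ ∀ l, ε ≤ d l := by
      rcases isEmpty_or_nonempty (Fin q) with hq | hq
      · exact ⟨1, one_pos, fun l => (IsEmpty.false l).elim⟩
      · refine ⟨Finset.univ.inf' Finset.univ_nonempty d, ?_,
          fun l => Finset.inf'_le d (Finset.mem_univ l)⟩
        exact (Finset.lt_inf'_iff _).mpr fun l _ => hd0 l
    set lam : Fin (k+1) → ℝ := fun j => if (j : ℕ) ≤ i then ε ^ (j : ℕ) else 0 with hlam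
    have hlamnn : ∀ j, 0 ≤ lam j := by
      intro j
      show (0:ℝ) ≤ if (j : ℕ) ≤ i then ε ^ (j : ℕ) else 0
      split
      · positivity
      · exact le_rfl
    set w : ℝ × (Fin n → ℝ) := ∑ j, lam j • v j with hw
    have hr : w.1 = ∑ j, lam j * (v j).1 := by
      rw [hw, Prod.fst_sum]
      exact Finset.sum_congr rfl fun j _ => rfl
    have hr0 : 0 < w.1 := by
      rw [hr]
      refine Finset.sum_pos' (fun j _ => mul_nonneg (hlamnn j) (hvpos j)) ?_
      refine ⟨0, Finset.mem_univ _, ?_⟩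
      have h0 : lam 0 = 1 := by
        show (if (((0 : Fin (k+1))) : ℕ) ≤ i then ε ^ (((0 : Fin (k+1))) : ℕ) else 0) = (1:ℝ)
        simp
      rw [h0, one_mul]
      exact hv0
    set r : ℝ := w.1 with hrdef
    have hrinv : 0 < r⁻¹ := inv_pos.mpr hr0
    set x : Fin n → ℝ := r⁻¹ • w.2 with hxdef
    have hx1 : ((1:ℝ), x) = ∑ j, (r⁻¹ * lam j) • v j := by
      have hsum : ∑ j, (r⁻¹ * lam j) • v j = r⁻¹ • w := by
        rw [hw, Finset.smul_sum]
        exact Finset.sum_congr rfl fun j _ => (mul_smul _ _ _)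
      rw [hsum]
      refine Prod.ext ?_ rfl
      show (1:ℝ) = r⁻¹ * w.1
      rw [← hrdef, inv_mul_cancel₀ (ne_of_gt hr0)]
    have hxint : x ∈ intrinsicInterior ℝ (P i) := by
      rw [hP i]
      refine StatementTenAux.memIntrinsicInterior_of_pos v f hf i x
        (fun j => r⁻¹ * lam j) (fun j hj => ?_) (fun j hj => ?_) hx1
      · have hlj : lam j = ε ^ (j : ℕ) := by
          show (if (j : ℕ) ≤ i then ε ^ (j : ℕ) else 0) = ε ^ (j : ℕ)
          rw [if_pos hj]
        show 0 < r⁻¹ * lam j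
        rw [hlj]
        positivity
      · have hlj : lam j = 0 := by
          show (if (j : ℕ) ≤ i then ε ^ (j : ℕ) else 0) = 0
          rw [if_neg (Nat.not_le.mpr hj)]
        show r⁻¹ * lam j = 0
        rw [hlj, mul_zero]
    have hxU : x ∈ U := by
      apply hsub
      intro l
      show γ l + pairZ x (u l) ≤ 0
      have hkey : γ l + pairZ x (u l) =
          pairE ((1:ℝ), x) (γ l, fun t => (u l t : ℝ)) := by
        simp [pairE, pairZ]
      rw [hkey, hx1, StatementTenAux.pairE_sum]
      have hsum2 : ∑ j, (r⁻¹ * lam j) * pairE (v j) (γ l, fun t => (u l t : ℝ)) =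
          r⁻¹ * ∑ j, lam j * e l j := by
        rw [Finset.mul_sum]
        exact Finset.sum_congr rfl fun j _ => by rw [he, mul_assoc]
      rw [hsum2]
      have hle0 : ∑ j : Fin (k+1), lam j * e l j ≤ 0 := by
        have := hdle l ε hε0 (hεle l)
        simpa [hlam] using this
      exact mul_nonpos_of_nonneg_of_nonpos hrinv.le hle0
    exact ⟨x, hxU, hxint⟩
  · -- (b) → (a)
    intro hb
    obtain ⟨q, uU, γU, hγU, hUeq⟩ := hU
    refine ⟨q, fun l => -γU l, uU, fun l => neg_mem (hγU l), fun l => ?_, fun x hx => ?_⟩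
    · -- the lexicographic condition
      set g : Fin (k+1) → ℝ :=
        fun j => pairE (v j) (-γU l, fun t => (uU l t : ℝ)) with hg
      show toLex g ≤ toLex (0 : Fin (k+1) → ℝ)
      by_cases hgz : g = 0
      · rw [hgz]
      have hex : ∃ j, g j ≠ 0 := by
        by_contra hcon
        push_neg at hcon
        exact hgz (funext hcon)
      have hsne : (Finset.univ.filter (fun j : Fin (k+1) => g j ≠ 0)).Nonempty :=
        ⟨hex.choose, by simp [hex.choose_spec]⟩
      obtain ⟨j0, hj0mem, hj0min⟩ := Finset.exists_min_image _ id hsne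
      have hj0 : g j0 ≠ 0 := (Finset.mem_filter.mp hj0mem).2
      have hpre : ∀ j, j < j0 → g j = 0 := by
        intro j hj
        by_contra hcon
        exact absurd hj (not_lt.mpr
          (hj0min j (Finset.mem_filter.mpr ⟨Finset.mem_univ _, hcon⟩)))
      have hneg : g j0 < 0 := by
        rcases hj0.lt_or_gt with h | h
        · exact h
        exfalso
        obtain ⟨x, hxU, hxint⟩ := hb (j0 : ℕ) (Nat.lt_succ_iff.mp j0.isLt)
        rw [hP (j0 : ℕ)] at hxint
        have hposf := StatementTenAux.pos_of_memIntrinsicInterior v f hf hv0 hvpos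
          j0 x hxint
        have hxS : x ∈ {y : Fin n → ℝ | ((1:ℝ), y) ∈ coneGenUpTo v (j0 : ℕ)} :=
          intrinsicInterior_subset hxint
        obtain ⟨lam, hnn, hzz, hrep⟩ := hxS
        have hflam : f j0 ((1:ℝ), x) = lam j0 := by
          rw [hrep]; exact StatementTenAux.f_apply_sum v f hf lam j0
        have hval : pairE ((1:ℝ), x) (-γU l, fun t => (uU l t : ℝ)) = lam j0 * g j0 := by
          rw [show ((1:ℝ), x) = ∑ j, lam j • v j from hrep,
            StatementTenAux.pairE_sum]
          refine Finset.sum_eq_single j0 (fun j _ hjne => ?_)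
            (fun habs => absurd (Finset.mem_univ j0) habs)
          rcases lt_or_gt_of_ne hjne with hlt | hgt
          · rw [show pairE (v j) (-γU l, fun t => (uU l t : ℝ)) = g j from rfl,
              hpre j hlt, mul_zero]
          · have : lam j = 0 := hzz j hgt
            rw [this, zero_mul]
        have hle0 : pairE ((1:ℝ), x) (-γU l, fun t => (uU l t : ℝ)) ≤ 0 := by
          have hxU' : pairZ x (uU l) ≤ γU l := by
            rw [hUeq] at hxU
            exact hxU l
          have : pairE ((1:ℝ), x) (-γU l, fun t => (uU l t : ℝ)) =
              -γU l + pairZ x (uU l) := by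
            simp [pairE, pairZ]
          rw [this]
          linarith
        rw [hval] at hle0
        have hlampos : 0 < lam j0 := by rw [← hflam]; exact hposf
        nlinarith
      refine le_of_lt ?_
      show Pi.Lex (· < ·) (fun {_} => (· < ·)) g (0 : Fin (k+1) → ℝ)
      exact ⟨j0, fun j hj => hpre j hj, hneg⟩
    · -- the inclusion in U
      rw [hUeq]
      intro l
      have := hx l
      simp only [Set.mem_setOf_eq] at this
      linarith

end
end

section
/- The map F ↦ {U ∈ F : U is a Γ-rational polytopal set} is a bijection from the set of prime filters on the lattice of Γ-rational polyhedral sets in ℝⁿ that contain a Γ-rational polytope onto the set of prime filters on the lattice of Γ-rational polytopal sets in ℝⁿ. Its inverse sends a prime filter G on the lattice of Γ-rational polytopal sets to the collection of all Γ-rational polyhedral sets that contain some member of G. -/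
open Finset

noncomputable section

/-- Prime filters on the lattice of `Γ`-rational polyhedral sets that contain a polytope. -/
def PolyhedralPrimeFiltersWithPolytope (n : ℕ) (Γ : AddSubgroup ℝ) :
    Set (Set (Set (Fin n → ℝ))) :=
  {F | IsPrimeFilterOn {U : Set (Fin n → ℝ) | IsGammaRatPolyhedralSet Γ U} F ∧
    ∃ U ∈ F, IsGammaRatPolytope Γ U}

/-- Prime filters on the lattice of `Γ`-rational polytopal sets. -/
def PolytopalPrimeFilters (n : ℕ) (Γ : AddSubgroup ℝ) : Set (Set (Set (Fin n → ℝ))) :=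
  {G | IsPrimeFilterOn {U : Set (Fin n → ℝ) | IsGammaRatPolytopalSet Γ U} G}

/-- The restriction map `F ↦ {U ∈ F : U polytopal}`. -/
def restrictToPolytopal (n : ℕ) (Γ : AddSubgroup ℝ) (F : Set (Set (Fin n → ℝ))) :
    Set (Set (Fin n → ℝ)) :=
  {U ∈ F | IsGammaRatPolytopalSet Γ U}

/-- The extension map sending `G` to the polyhedral sets containing some member of `G`. -/
def extendToPolyhedral (n : ℕ) (Γ : AddSubgroup ℝ) (G : Set (Set (Fin n → ℝ))) :
    Set (Set (Fin n → ℝ)) :=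
  {U | IsGammaRatPolyhedralSet Γ U ∧ ∃ V ∈ G, V ⊆ U}

namespace CM12

lemma iUnion_append {α : Type*} {m1 m2 : ℕ} (Q1 : Fin m1 → Set α) (Q2 : Fin m2 → Set α) :
    (⋃ j, Fin.append Q1 Q2 j) = (⋃ j, Q1 j) ∪ (⋃ j, Q2 j) := by
  ext x
  simp only [Set.mem_iUnion, Set.mem_union]
  constructor
  · rintro ⟨j, hj⟩
    induction j using Fin.addCases with
    | left i => exact Or.inl ⟨i, by simpa [Fin.append_left] using hj⟩
    | right i => exact Or.inr ⟨i, by simpa [Fin.append_right] using hj⟩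
  · rintro (⟨i, hi⟩ | ⟨i, hi⟩)
    · exact ⟨Fin.castAdd _ i, by simpa [Fin.append_left] using hi⟩
    · exact ⟨Fin.natAdd _ i, by simpa [Fin.append_right] using hi⟩

lemma iUnion_prod_inter {α : Type*} {m1 m2 : ℕ} (Q1 : Fin m1 → Set α) (Q2 : Fin m2 → Set α) :
    ((⋃ j, Q1 j) ∩ ⋃ j, Q2 j) =
      ⋃ j : Fin (m1 * m2), (Q1 (finProdFinEquiv.symm j).1 ∩ Q2 (finProdFinEquiv.symm j).2) := by
  ext x
  simp only [Set.mem_inter_iff, Set.mem_iUnion]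
  constructor
  · rintro ⟨⟨j1, h1⟩, ⟨j2, h2⟩⟩
    exact ⟨finProdFinEquiv (j1, j2), by simpa using h1, by simpa using h2⟩
  · rintro ⟨j, h1, h2⟩
    exact ⟨⟨_, h1⟩, ⟨_, h2⟩⟩

variable {n : ℕ} {Γ : AddSubgroup ℝ}

lemma polyhedron_inter {Q R : Set (Fin n → ℝ)} (hQ : IsGammaRatPolyhedron Γ Q)
    (hR : IsGammaRatPolyhedron Γ R) : IsGammaRatPolyhedron Γ (Q ∩ R) := by
  obtain ⟨q1, u1, γ1, hγ1, rfl⟩ := hQ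
  obtain ⟨q2, u2, γ2, hγ2, rfl⟩ := hR
  refine ⟨q1 + q2, Fin.append u1 u2, Fin.append γ1 γ2, ?_, ?_⟩
  · intro l
    induction l using Fin.addCases with
    | left i => simpa [Fin.append_left] using hγ1 i
    | right i => simpa [Fin.append_right] using hγ2 i
  · ext x
    simp only [Set.mem_inter_iff, Set.mem_setOf_eq]
    constructor
    · rintro ⟨h1, h2⟩ l
      induction l using Fin.addCases with
      | left i => simpa [Fin.append_left] using h1 i
      | right i => simpa [Fin.append_right] using h2 i
    · intro h
      exact ⟨fun l => by simpa [Fin.append_left] using h (Fin.castAdd q2 l),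
             fun l => by simpa [Fin.append_right] using h (Fin.natAdd q1 l)⟩

lemma polytope_inter {Q R : Set (Fin n → ℝ)} (hQ : IsGammaRatPolytope Γ Q)
    (hR : IsGammaRatPolyhedron Γ R) : IsGammaRatPolytope Γ (Q ∩ R) :=
  ⟨polyhedron_inter hQ.1 hR, hQ.2.subset Set.inter_subset_left⟩

lemma polyhedron_polyhedralSet {Q : Set (Fin n → ℝ)} (hQ : IsGammaRatPolyhedron Γ Q) :
    IsGammaRatPolyhedralSet Γ Q :=
  ⟨1, fun _ => Q, fun _ => hQ, (Set.iUnion_const Q).symm⟩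

lemma polytope_polytopalSet {Q : Set (Fin n → ℝ)} (hQ : IsGammaRatPolytope Γ Q) :
    IsGammaRatPolytopalSet Γ Q :=
  ⟨1, fun _ => Q, fun _ => hQ, (Set.iUnion_const Q).symm⟩

lemma polytopalSet_polyhedralSet {U : Set (Fin n → ℝ)} (hU : IsGammaRatPolytopalSet Γ U) :
    IsGammaRatPolyhedralSet Γ U := by
  obtain ⟨m, Q, hQ, rfl⟩ := hU
  exact ⟨m, Q, fun j => (hQ j).1, rfl⟩

lemma polyhedralSet_empty : IsGammaRatPolyhedralSet Γ (∅ : Set (Fin n → ℝ)) :=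
  ⟨0, fun j => ∅, fun j => j.elim0, by simp⟩

lemma polytopalSet_empty : IsGammaRatPolytopalSet Γ (∅ : Set (Fin n → ℝ)) :=
  ⟨0, fun j => ∅, fun j => j.elim0, by simp⟩

lemma polyhedralSet_union {U V : Set (Fin n → ℝ)} (hU : IsGammaRatPolyhedralSet Γ U)
    (hV : IsGammaRatPolyhedralSet Γ V) : IsGammaRatPolyhedralSet Γ (U ∪ V) := by
  obtain ⟨m1, Q1, hQ1, rfl⟩ := hU
  obtain ⟨m2, Q2, hQ2, rfl⟩ := hV
  refine ⟨m1 + m2, Fin.append Q1 Q2, fun j => ?_, (iUnion_append Q1 Q2).symm⟩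
  induction j using Fin.addCases with
  | left i => simpa [Fin.append_left] using hQ1 i
  | right i => simpa [Fin.append_right] using hQ2 i

lemma polyhedralSet_inter {U V : Set (Fin n → ℝ)} (hU : IsGammaRatPolyhedralSet Γ U)
    (hV : IsGammaRatPolyhedralSet Γ V) : IsGammaRatPolyhedralSet Γ (U ∩ V) := by
  obtain ⟨m1, Q1, hQ1, rfl⟩ := hU
  obtain ⟨m2, Q2, hQ2, rfl⟩ := hV
  exact ⟨m1 * m2, _, fun j => polyhedron_inter (hQ1 _) (hQ2 _), iUnion_prod_inter Q1 Q2⟩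

lemma polytopalSet_inter_polyhedralSet {U V : Set (Fin n → ℝ)}
    (hU : IsGammaRatPolytopalSet Γ U) (hV : IsGammaRatPolyhedralSet Γ V) :
    IsGammaRatPolytopalSet Γ (U ∩ V) := by
  obtain ⟨m1, Q1, hQ1, rfl⟩ := hU
  obtain ⟨m2, Q2, hQ2, rfl⟩ := hV
  exact ⟨m1 * m2, _, fun j => polytope_inter (hQ1 _) (hQ2 _), iUnion_prod_inter Q1 Q2⟩

lemma polytopalSet_bounded {U : Set (Fin n → ℝ)} (hU : IsGammaRatPolytopalSet Γ U) :
    Bornology.IsBounded U := by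
  obtain ⟨m, Q, hQ, rfl⟩ := hU
  exact Bornology.isBounded_iUnion.2 fun j => (hQ j).2

lemma pairZ_ite (x : Fin n → ℝ) (i : Fin n) (c : ℤ) :
    pairZ x (fun j => if j = i then c else 0) = x i * c := by
  simp [pairZ, apply_ite (fun z : ℤ => (z : ℝ)), mul_ite]

lemma exists_polytope_superset (hΓ : Γ ≠ ⊥) {V : Set (Fin n → ℝ)}
    (hV : Bornology.IsBounded V) : ∃ B, IsGammaRatPolytope Γ B ∧ V ⊆ B := by
  obtain ⟨g, hgΓ, hg0⟩ : ∃ g ∈ Γ, g ≠ 0 := by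
    by_contra h
    push_neg at h
    exact hΓ ((AddSubgroup.eq_bot_iff_forall Γ).2 h)
  have hgΓ' : |g| ∈ Γ := by
    rcases abs_choice g with h | h
    · rwa [h]
    · rw [h]; exact neg_mem hgΓ
  have hgpos : 0 < |g| := abs_pos.2 hg0
  obtain ⟨R, hR⟩ := (Metric.isBounded_iff_subset_closedBall 0).1 hV
  obtain ⟨m, hm⟩ := exists_nat_ge (R / |g|)
  set c : ℝ := (m : ℝ) * |g| with hc
  have hcΓ : c ∈ Γ := by
    have := AddSubgroup.nsmul_mem Γ hgΓ' m
    rwa [nsmul_eq_mul] at this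
  have hRc : R ≤ c := (div_le_iff₀ hgpos).1 hm
  have hc0 : 0 ≤ c := mul_nonneg (Nat.cast_nonneg m) (le_of_lt hgpos)
  set u : Fin (n + n) → (Fin n → ℤ) :=
    Fin.append (fun i : Fin n => fun j => if j = i then 1 else 0)
      (fun i : Fin n => fun j => if j = i then -1 else 0) with hu
  set B : Set (Fin n → ℝ) := {x | ∀ l, pairZ x (u l) ≤ c} with hB
  have hmemB : ∀ x : Fin n → ℝ, x ∈ B ↔ ∀ i, |x i| ≤ c := by
    intro x
    constructor
    · intro hx i
      rw [abs_le]
      constructor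
      · have := hx (Fin.natAdd n i)
        rw [hu] at this
        simp only [Fin.append_right, pairZ_ite] at this
        push_cast at this
        linarith
      · have := hx (Fin.castAdd n i)
        rw [hu] at this
        simp only [Fin.append_left, pairZ_ite] at this
        push_cast at this
        linarith
    · intro hx l
      induction l using Fin.addCases with
      | left i =>
        rw [hu]
        simp only [Fin.append_left, pairZ_ite]
        push_cast
        have := (abs_le.1 (hx i)).2
        linarith
      | right i =>
        rw [hu]
        simp only [Fin.append_right, pairZ_ite]
        push_cast
        have := (abs_le.1 (hx i)).1
        linarith
  refine ⟨B, ⟨⟨n + n, u, fun _ => c, fun _ => hcΓ, rfl⟩, ?_⟩, ?_⟩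
  · apply Bornology.IsBounded.subset (Metric.isBounded_closedBall (x := (0 : Fin n → ℝ)) (r := c))
    intro x hx
    rw [Metric.mem_closedBall]
    rw [dist_pi_le_iff hc0]
    intro i
    simp only [Pi.zero_apply, Real.dist_eq, sub_zero]
    exact (hmemB x).1 hx i
  · intro x hxV
    rw [hmemB]
    intro i
    have hd : dist x (0 : Fin n → ℝ) ≤ R := by
      have := hR hxV
      rwa [Metric.mem_closedBall] at this
    have : dist (x i) ((0 : Fin n → ℝ) i) ≤ R := le_trans (dist_le_pi_dist x 0 i) hd
    simp only [Pi.zero_apply, Real.dist_eq, sub_zero] at this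
    linarith

lemma not_empty_mem {α : Type*} {L F : Set (Set α)} (h : IsPrimeFilterOn L F) :
    (∅ : Set α) ∉ F := by
  intro h0
  obtain ⟨hFL, _, hne, hup, _, _⟩ := h
  exact hne (Set.Subset.antisymm hFL (fun U hU => hup ∅ h0 U hU (Set.empty_subset U)))

end CM12

open CM12 in

/-- `F ↦ {U ∈ F : U polytopal}` is a bijection from the prime filters on the
lattice of `Γ`-rational polyhedral sets containing a polytope onto the prime filters on the
lattice of `Γ`-rational polytopal sets, with inverse `G ↦ {polyhedral sets containing some
member of G}`. -/
theorem restrictToPolytopal_bijOn_with_inverse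
    (n : ℕ) (hn : 1 ≤ n) (Γ : AddSubgroup ℝ) (hΓ : Γ ≠ ⊥) :
    Set.BijOn (restrictToPolytopal n Γ) (PolyhedralPrimeFiltersWithPolytope n Γ)
      (PolytopalPrimeFilters n Γ) ∧
    (∀ G ∈ PolytopalPrimeFilters n Γ,
      extendToPolyhedral n Γ G ∈ PolyhedralPrimeFiltersWithPolytope n Γ) ∧
    (∀ F ∈ PolyhedralPrimeFiltersWithPolytope n Γ,
      extendToPolyhedral n Γ (restrictToPolytopal n Γ F) = F) ∧
    (∀ G ∈ PolytopalPrimeFilters n Γ,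
      restrictToPolytopal n Γ (extendToPolyhedral n Γ G) = G) := by
  classical
  set L : Set (Set (Fin n → ℝ)) := {U | IsGammaRatPolyhedralSet Γ U} with hLdef
  set Lp : Set (Set (Fin n → ℝ)) := {U | IsGammaRatPolytopalSet Γ U} with hLpdef
  -- restriction maps into PolytopalPrimeFilters
  have hRmem : ∀ F ∈ PolyhedralPrimeFiltersWithPolytope n Γ,
      restrictToPolytopal n Γ F ∈ PolytopalPrimeFilters n Γ := by
    rintro F ⟨⟨hFL, hFne, hFneq, hFup, hFint, hFpr⟩, U0, hU0F, hU0⟩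
    have hEF : (∅ : Set (Fin n → ℝ)) ∉ F :=
      not_empty_mem ⟨hFL, hFne, hFneq, hFup, hFint, hFpr⟩
    refine ⟨fun U hU => hU.2, ⟨U0, hU0F, polytope_polytopalSet hU0⟩, ?_, ?_, ?_, ?_⟩
    · intro h
      have : (∅ : Set (Fin n → ℝ)) ∈ restrictToPolytopal n Γ F := by
        rw [h]; exact polytopalSet_empty
      exact hEF this.1
    · rintro U ⟨hUF, hUpt⟩ V hV hUV
      exact ⟨hFup U hUF V (polytopalSet_polyhedralSet hV) hUV, hV⟩
    · rintro U ⟨hUF, hUpt⟩ V ⟨hVF, hVpt⟩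
      exact ⟨hFint U hUF V hVF,
        polytopalSet_inter_polyhedralSet hUpt (polytopalSet_polyhedralSet hVpt)⟩
    · rintro U hU V hV ⟨hUVF, _⟩
      rcases hFpr U (polytopalSet_polyhedralSet hU) V (polytopalSet_polyhedralSet hV) hUVF with
        h | h
      · exact Or.inl ⟨h, hU⟩
      · exact Or.inr ⟨h, hV⟩
  -- extension maps into PolyhedralPrimeFiltersWithPolytope
  have hEmem : ∀ G ∈ PolytopalPrimeFilters n Γ,
      extendToPolyhedral n Γ G ∈ PolyhedralPrimeFiltersWithPolytope n Γ := by
    rintro G ⟨hGL, ⟨V0, hV0G⟩, hGneq, hGup, hGint, hGpr⟩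
    have hEG : (∅ : Set (Fin n → ℝ)) ∉ G :=
      not_empty_mem ⟨hGL, ⟨V0, hV0G⟩, hGneq, hGup, hGint, hGpr⟩
    obtain ⟨B, hB, hV0B⟩ := exists_polytope_superset hΓ (polytopalSet_bounded (hGL hV0G))
    refine ⟨⟨fun U hU => hU.1, ⟨B, polyhedron_polyhedralSet hB.1, V0, hV0G, hV0B⟩, ?_, ?_, ?_, ?_⟩,
      B, ⟨polyhedron_polyhedralSet hB.1, V0, hV0G, hV0B⟩, hB⟩
    · intro h
      have : (∅ : Set (Fin n → ℝ)) ∈ extendToPolyhedral n Γ G := by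
        rw [h]; exact polyhedralSet_empty
      obtain ⟨-, V, hVG, hVsub⟩ := this
      rw [Set.subset_empty_iff.1 hVsub] at hVG
      exact hEG hVG
    · rintro U ⟨hUp, V, hVG, hVU⟩ W hW hUW
      exact ⟨hW, V, hVG, hVU.trans hUW⟩
    · rintro U ⟨hUp, V1, hV1G, hV1U⟩ W ⟨hWp, V2, hV2G, hV2W⟩
      exact ⟨polyhedralSet_inter hUp hWp, V1 ∩ V2, hGint V1 hV1G V2 hV2G,
        Set.inter_subset_inter hV1U hV2W⟩
    · rintro U hU W hW ⟨-, V, hVG, hVsub⟩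
      have hpt := hGL hVG
      have h1 : IsGammaRatPolytopalSet Γ (V ∩ U) := polytopalSet_inter_polyhedralSet hpt hU
      have h2 : IsGammaRatPolytopalSet Γ (V ∩ W) := polytopalSet_inter_polyhedralSet hpt hW
      have hunion : (V ∩ U) ∪ (V ∩ W) ∈ G := by
        have : (V ∩ U) ∪ (V ∩ W) = V := by
          rw [← Set.inter_union_distrib_left, Set.inter_eq_left.2 hVsub]
        rw [this]; exact hVG
      rcases hGpr (V ∩ U) h1 (V ∩ W) h2 hunion with h | h
      · exact Or.inl ⟨hU, V ∩ U, h, Set.inter_subset_right⟩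
      · exact Or.inr ⟨hW, V ∩ W, h, Set.inter_subset_right⟩
  -- extend ∘ restrict = id
  have hER : ∀ F ∈ PolyhedralPrimeFiltersWithPolytope n Γ,
      extendToPolyhedral n Γ (restrictToPolytopal n Γ F) = F := by
    rintro F ⟨⟨hFL, hFne, hFneq, hFup, hFint, hFpr⟩, U0, hU0F, hU0⟩
    ext U
    constructor
    · rintro ⟨hUp, V, ⟨hVF, -⟩, hVU⟩
      exact hFup V hVF U hUp hVU
    · intro hUF
      refine ⟨hFL hUF, U0 ∩ U, ⟨hFint U0 hU0F U hUF, ?_⟩, Set.inter_subset_right⟩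
      exact polytopalSet_inter_polyhedralSet (polytope_polytopalSet hU0) (hFL hUF)
  -- restrict ∘ extend = id
  have hRE : ∀ G ∈ PolytopalPrimeFilters n Γ,
      restrictToPolytopal n Γ (extendToPolyhedral n Γ G) = G := by
    rintro G ⟨hGL, hGne, hGneq, hGup, hGint, hGpr⟩
    ext U
    constructor
    · rintro ⟨⟨hUp, V, hVG, hVU⟩, hUpt⟩
      exact hGup V hVG U hUpt hVU
    · intro hUG
      have hUpt := hGL hUG
      exact ⟨⟨polytopalSet_polyhedralSet hUpt, U, hUG, subset_rfl⟩, hUpt⟩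
  refine ⟨⟨hRmem, ?_, ?_⟩, hEmem, hER, hRE⟩
  · intro F1 h1 F2 h2 hEq
    rw [← hER F1 h1, ← hER F2 h2, hEq]
  · intro G hG
    exact ⟨extendToPolyhedral n Γ G, hEmem G hG, hRE G hG⟩

end
end

section
/- Let F be a prime filter on the lattice of Γ-rational polyhedral sets in ℝⁿ that contains a Γ-rational polytope. Define a relation ⪯_F on Γ×ℤⁿ by: (α,u) ⪯_F (β,λ) if and only if {x ∈ ℝⁿ : α + ⟨x,u⟩ ≤ β + ⟨x,λ⟩} ∈ F. Then ⪯_F is a Chan–Maclagan preorder on Γ×ℤⁿ; that is: (1) ⪯_F is a total preorder; (2) 𝔲 ⪯_F 𝔳 implies 𝔲+𝔴 ⪯_F 𝔳+𝔴 for all 𝔴 ∈ Γ×ℤⁿ; (3) (α,0) ⪯_F (β,0) whenever α ≤ β in Γ; and (4) for every 𝔲 ∈ Γ×ℤⁿ there exists β ∈ Γ with (β,0) ≺_F 𝔲 (i.e. (β,0) ⪯_F 𝔲 and not 𝔲 ⪯_F (β,0)). -/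
open Finset

noncomputable section

lemma pairZ_sub {n : ℕ} (x : Fin n → ℝ) (u v : Fin n → ℤ) :
    pairZ x (u - v) = pairZ x u - pairZ x v := by
  simp [pairZ, mul_sub, Finset.sum_sub_distrib]

lemma pairZ_add' {n : ℕ} (x : Fin n → ℝ) (u v : Fin n → ℤ) :
    pairZ x (u + v) = pairZ x u + pairZ x v := by
  simp [pairZ, mul_add, Finset.sum_add_distrib]

lemma pairZ_zero' {n : ℕ} (x : Fin n → ℝ) : pairZ x 0 = 0 := by simp [pairZ]

lemma halfspace_mem_lattice {n : ℕ} (Γ : AddSubgroup ℝ) (a b : Γ × (Fin n → ℤ)) :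
    IsGammaRatPolyhedralSet Γ
      {x : Fin n → ℝ | (a.1 : ℝ) + pairZ x a.2 ≤ (b.1 : ℝ) + pairZ x b.2} := by
  refine ⟨1, fun _ => {x : Fin n → ℝ | (a.1 : ℝ) + pairZ x a.2 ≤ (b.1 : ℝ) + pairZ x b.2},
    fun j => ⟨1, fun _ => a.2 - b.2, fun _ => ((b.1 - a.1 : Γ) : ℝ),
    fun _ => (b.1 - a.1 : Γ).2, ?_⟩, (Set.iUnion_const _).symm⟩
  ext x
  simp only [Set.mem_setOf_eq, pairZ_sub]
  constructor
  · intro h _; push_cast; linarith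
  · intro h; have := h 0; push_cast at this; linarith

/-- The relation on `Γ × ℤⁿ` defined by a prime filter (containing a polytope)
on the lattice of `Γ`-rational polyhedral sets is a Chan–Maclagan preorder. -/
theorem filter_relation_isChanMaclaganPreorder
    (n : ℕ) (hn : 1 ≤ n) (Γ : AddSubgroup ℝ) (hΓ : Γ ≠ ⊥)
    (F : Set (Set (Fin n → ℝ)))
    (hF : IsPrimeFilterOn {U : Set (Fin n → ℝ) | IsGammaRatPolyhedralSet Γ U} F)
    (hpoly : ∃ U ∈ F, IsGammaRatPolytope Γ U)
    (r : (Γ × (Fin n → ℤ)) → (Γ × (Fin n → ℤ)) → Prop)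
    (hr : ∀ a b : Γ × (Fin n → ℤ),
      r a b ↔ {x : Fin n → ℝ | (a.1 : ℝ) + pairZ x a.2 ≤ (b.1 : ℝ) + pairZ x b.2} ∈ F) :
    IsChanMaclaganPreorder Γ r := by
  obtain ⟨hFL, ⟨U0, hU0⟩, hFne, hup, hinter, hprime⟩ := hF
  have hL_univ : IsGammaRatPolyhedralSet Γ (Set.univ : Set (Fin n → ℝ)) := by
    refine ⟨1, fun _ => Set.univ, fun j => ⟨0, Fin.elim0, Fin.elim0, fun l => l.elim0, ?_⟩,
      (Set.iUnion_const _).symm⟩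
    ext x; simp
  have huniv : (Set.univ : Set (Fin n → ℝ)) ∈ F :=
    hup U0 hU0 _ hL_univ (Set.subset_univ _)
  have hempty : (∅ : Set (Fin n → ℝ)) ∉ F := by
    intro h
    exact hFne (Set.Subset.antisymm hFL (fun V hV => hup ∅ h V hV (Set.empty_subset V)))
  have hmemL : ∀ a b : Γ × (Fin n → ℤ),
      {x : Fin n → ℝ | (a.1 : ℝ) + pairZ x a.2 ≤ (b.1 : ℝ) + pairZ x b.2} ∈
        {U : Set (Fin n → ℝ) | IsGammaRatPolyhedralSet Γ U} :=
    fun a b => halfspace_mem_lattice Γ a b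
  constructor
  · refine ⟨?_, ?_, ?_, ?_, ?_⟩
    · intro a
      rw [hr]
      have : {x : Fin n → ℝ | (a.1 : ℝ) + pairZ x a.2 ≤ (a.1 : ℝ) + pairZ x a.2} = Set.univ := by
        ext x; simp
      rw [this]; exact huniv
    · intro a b c hab hbc
      rw [hr] at hab hbc ⊢
      refine hup _ (hinter _ hab _ hbc) _ (hmemL a c) ?_
      intro x hx
      simp only [Set.mem_inter_iff, Set.mem_setOf_eq] at hx ⊢
      linarith [hx.1, hx.2]
    · intro a b
      rw [hr, hr]
      refine hprime _ (hmemL a b) _ (hmemL b a) ?_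
      have : ({x : Fin n → ℝ | (a.1 : ℝ) + pairZ x a.2 ≤ (b.1 : ℝ) + pairZ x b.2} ∪
          {x : Fin n → ℝ | (b.1 : ℝ) + pairZ x b.2 ≤ (a.1 : ℝ) + pairZ x a.2}) = Set.univ := by
        ext x
        simp only [Set.mem_union, Set.mem_setOf_eq, Set.mem_univ, iff_true]
        exact le_total _ _
      rw [this]; exact huniv
    · intro a b c hab
      rw [hr] at hab ⊢
      have : {x : Fin n → ℝ | ((a + c).1 : ℝ) + pairZ x (a + c).2 ≤
          ((b + c).1 : ℝ) + pairZ x (b + c).2} =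
          {x : Fin n → ℝ | (a.1 : ℝ) + pairZ x a.2 ≤ (b.1 : ℝ) + pairZ x b.2} := by
        ext x
        simp only [Set.mem_setOf_eq, Prod.fst_add, Prod.snd_add, pairZ_add',
          AddSubgroup.coe_add]
        constructor <;> intro h <;> linarith
      rw [this]; exact hab
    · intro α β hαβ
      rw [hr]
      have : {x : Fin n → ℝ | (((α, 0) : Γ × (Fin n → ℤ)).1 : ℝ) + pairZ x ((α, 0) : Γ × (Fin n → ℤ)).2 ≤
          (((β, 0) : Γ × (Fin n → ℤ)).1 : ℝ) + pairZ x ((β, 0) : Γ × (Fin n → ℤ)).2} = Set.univ := by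
        ext x
        simp [pairZ_zero', hαβ]
      rw [this]; exact huniv
  · intro a
    obtain ⟨U, hUF, hUpoly, hUbdd⟩ := hpoly
    obtain ⟨Cb, hCb⟩ := hUbdd.exists_norm_le
    set S : ℝ := ∑ i, |((a.2 i : ℝ))| with hS
    have hS0 : 0 ≤ S := Finset.sum_nonneg fun i _ => abs_nonneg _
    have hCb' : ∀ x ∈ U, |pairZ x a.2| ≤ (max Cb 0) * S := by
      intro x hx
      calc |pairZ x a.2| ≤ ∑ i, |x i * (a.2 i : ℝ)| := Finset.abs_sum_le_sum_abs _ _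
        _ ≤ ∑ i, (max Cb 0) * |((a.2 i : ℝ))| := by
            refine Finset.sum_le_sum fun i _ => ?_
            rw [abs_mul]
            refine mul_le_mul_of_nonneg_right ?_ (abs_nonneg _)
            calc |x i| = ‖x i‖ := (Real.norm_eq_abs _).symm
              _ ≤ ‖x‖ := norm_le_pi_norm x i
              _ ≤ Cb := hCb x hx
              _ ≤ max Cb 0 := le_max_left _ _
        _ = (max Cb 0) * S := by rw [hS, Finset.mul_sum]
    set M : ℝ := (a.1 : ℝ) - (max Cb 0) * S with hM
    -- find β ∈ Γ with β < M
    have hgex : ∃ g ∈ Γ, g < 0 := by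
      have : ∃ g ∈ Γ, g ≠ 0 := by
        by_contra h
        push_neg at h
        refine hΓ ?_
        ext x
        simp only [AddSubgroup.mem_bot]
        exact ⟨fun hx => h x hx, fun hx => hx ▸ Γ.zero_mem⟩
      obtain ⟨g, hgΓ, hg0⟩ := this
      rcases lt_or_gt_of_ne hg0 with h | h
      · exact ⟨g, hgΓ, h⟩
      · exact ⟨-g, Γ.neg_mem hgΓ, neg_lt_zero.mpr h⟩
    obtain ⟨g, hgΓ, hgneg⟩ := hgex
    obtain ⟨k, hk⟩ := exists_nat_gt (M / g)
    have hkg : (k : ℝ) * g < M := (div_lt_iff_of_neg hgneg).mp hk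
    have hkgΓ : (k : ℝ) * g ∈ Γ := by
      have := Γ.nsmul_mem hgΓ k
      simpa [nsmul_eq_mul] using this
    refine ⟨⟨(k : ℝ) * g, hkgΓ⟩, ?_, ?_⟩
    · rw [hr]
      refine hup U hUF _ (hmemL _ _) ?_
      intro x hx
      simp only [Set.mem_setOf_eq, pairZ_zero']
      have h1 : -((max Cb 0) * S) ≤ pairZ x a.2 := by
        have := (abs_le.mp (hCb' x hx)).1
        linarith
      have : ((k : ℝ) * g) < (a.1 : ℝ) + pairZ x a.2 := by
        simp only [hM] at hkg; linarith
      linarith [this]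
    · intro hcon
      rw [hr] at hcon
      have hint := hinter _ hcon _ hUF
      refine hempty ?_
      have : ({x : Fin n → ℝ | (a.1 : ℝ) + pairZ x a.2 ≤
          ((⟨(k : ℝ) * g, hkgΓ⟩ : Γ) : ℝ) + pairZ x (0 : Fin n → ℤ)} ∩ U) = ∅ := by
        ext x
        simp only [Set.mem_inter_iff, Set.mem_setOf_eq, Set.mem_empty_iff_false, iff_false,
          not_and, pairZ_zero']
        intro hle hx
        have h1 : -((max Cb 0) * S) ≤ pairZ x a.2 := by
          have := (abs_le.mp (hCb' x hx)).1
          linarith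
        simp only [hM] at hkg
        rw [add_zero] at hle
        linarith
      rw [this] at hint
      exact hint


end
end
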